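/- arXiv:2604.13498 — 3 statements merged into one kernel-verified Lean document; each statement's English description precedes it below -/
import Mathlib

section
/- Let Φ be a Young function of class Δ₂ ∩ ∇₂ admitting the representation Φ(t) = ∫₀ᵗ φ(s) ds, where φ: [0,∞) → [0,∞) is nondecreasing, right-continuous, φ(0)=0, φ(s)>0 for s>0, and φ(s) → +∞ as s → +∞. Let f: ℝ³ × ℝ^{3×3} → ℝ be a Carathéodory function satisfying (H1) and (H2). Then there exists a constant C>0 such that for every linear subspace V ⊆ ℝ³ and all ξ_α, ξ_α' ∈ V²: |Tf⁰hom(V, ξ_α) − Tf⁰hom(V, ξ_α')| ≤ C·|ξ_α − ξ_α'|·(1 + φ(|ξ_α| + |ξ_α'|)). -/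
open MeasureTheory Filter

noncomputable section

abbrev V3 : Type := Fin 3 → ℝ
abbrev V2 : Type := Fin 2 → ℝ
abbrev M33 : Type := Matrix (Fin 3) (Fin 3) ℝ
abbrev M32 : Type := Matrix (Fin 3) (Fin 2) ℝ

/-- `Φ : [0,∞) → [0,∞)` is a Young function: continuous, convex, positive for `t > 0`,
`Φ(t)/t → 0` as `t → 0⁺` and `Φ(t)/t → ∞` as `t → ∞`. -/
def IsYoung (Φ : ℝ → ℝ) : Prop :=
  ContinuousOn Φ (Set.Ici 0) ∧ ConvexOn ℝ (Set.Ici 0) Φ ∧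
  (∀ t : ℝ, 0 < t → 0 < Φ t) ∧
  Tendsto (fun t => Φ t / t) (nhdsWithin 0 (Set.Ioi 0)) (nhds 0) ∧
  Tendsto (fun t => Φ t / t) atTop atTop

/-- The Δ₂ condition (at infinity). -/
def Delta2 (Φ : ℝ → ℝ) : Prop :=
  ∃ α : ℝ, 0 < α ∧ ∃ t₀ : ℝ, 0 ≤ t₀ ∧ ∀ t, t₀ ≤ t → Φ (2 * t) ≤ α * Φ t

/-- The ∇₂ condition. -/
def Nabla2 (Φ : ℝ → ℝ) : Prop :=
  ∃ β : ℝ, 0 < β ∧ ∃ t₀ : ℝ, 1 < t₀ ∧ ∀ t, t₀ ≤ t → Φ t ≤ (1 / (2 * β)) * Φ (β * t)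

/-- Frobenius norm of a real matrix. -/
def frobNorm {m n : ℕ} (ξ : Matrix (Fin m) (Fin n) ℝ) : ℝ :=
  Real.sqrt (∑ i, ∑ j, (ξ i j) ^ 2)

/-- The open cylinder `(tQ')₁ = (−t/2,t/2)² × (−1/2,1/2)`. -/
def openCyl (t : ℝ) : Set V3 := {x | |x 0| < t / 2 ∧ |x 1| < t / 2 ∧ |x 2| < 1 / 2}

/-- The lateral boundary `∂((−t/2,t/2)²) × (−1/2,1/2)`. -/
def latBdry (t : ℝ) : Set V3 := {x | max |x 0| |x 1| = t / 2 ∧ |x 2| < 1 / 2}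

/-- The (a.e. defined, via Rademacher) matrix of partial derivatives of a Lipschitz map:
row `i`, column `j` is `∂φᵢ/∂xⱼ`. -/
def gradm (φ : V3 → V3) (x : V3) : M33 :=
  Matrix.of fun i j => fderiv ℝ φ x (Pi.single j 1) i

/-- Planar-gradient matrix (3×2) of a map on `ℝ²`. -/
def gradm2 (ψ : V2 → V3) (y : V2) : M32 :=
  Matrix.of fun i j => fderiv ℝ ψ y (Pi.single j 1) i

/-- The 3×3 matrix `(ξ_α + ∇_αφ | ∇₃φ)`: first two columns of `A` shifted by `ξ_α`,
third column untouched. -/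
def withCol (ξα : M32) (A : M33) : M33 :=
  Matrix.of fun i j => (if h : (j : ℕ) < 2 then ξα i ⟨(j : ℕ), h⟩ else 0) + A i j

/-- The admissible class `𝒜_t`: Lipschitz maps vanishing on the lateral boundary. -/
def AdmSet (t : ℝ) : Set (V3 → V3) :=
  {φ | (∃ K : NNReal, LipschitzWith K φ) ∧ ∀ x ∈ latBdry t, φ x = 0}

/-- The constrained admissible class `𝒜_t(V)`: members of `𝒜_t` with values in `V`. -/
def AdmVSet (t : ℝ) (V : Submodule ℝ V3) : Set (V3 → V3) :=
  {φ | φ ∈ AdmSet t ∧ ∀ x, φ x ∈ V}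

/-- The cell energy `∫_{(tQ')₁} f(x, (ξ_α + ∇_αφ | ∇₃φ)) dx`. -/
def cellE (f : V3 → M33 → ℝ) (ξα : M32) (t : ℝ) (φ : V3 → V3) : ℝ :=
  ∫ x in openCyl t, f x (withCol ξα (gradm φ x))

/-- The cell infimum over a class `S` of test maps. -/
def cellInf (f : V3 → M33 → ℝ) (ξα : M32) (t : ℝ) (S : Set (V3 → V3)) : ℝ :=
  sInf ((fun φ => cellE f ξα t φ) '' S)

/-- The constrained tangentially homogenized density `Tf⁰hom(V, ξ_α)`. -/
def Tf0hom (f : V3 → M33 → ℝ) (V : Submodule ℝ V3) (ξα : M32) : ℝ :=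
  liminf (fun t : ℝ => (t ^ 2)⁻¹ * cellInf f ξα t (AdmVSet t V)) atTop

/-- The unconstrained homogenized density (liminf of the scaled cell infima over `𝒜_t`). -/
def homDens (f : V3 → M33 → ℝ) (ξα : M32) : ℝ :=
  liminf (fun t : ℝ => (t ^ 2)⁻¹ * cellInf f ξα t (AdmSet t)) atTop

/-- `P` is the orthogonal projection of `ℝ³` onto the subspace `V` (with respect to the
Euclidean inner product). -/
def IsOrthProjOnto (V : Submodule ℝ V3) (P : V3 → V3) : Prop :=
  IsLinearMap ℝ P ∧ (∀ x, P x ∈ V) ∧ (∀ x ∈ V, P x = x) ∧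
    (∀ x : V3, ∀ v ∈ V, (∑ i, (x i - P x i) * v i) = 0)

/-- Column-wise action `𝐏ξ = (Pξ₁ | Pξ₂ | Pξ₃)` of a projection on 3×3 matrices. -/
def Pmat (P : V3 → V3) (ξ : M33) : M33 :=
  Matrix.of fun i j => P (fun k => ξ k j) i

/-- The penalized integrand `f̄(x,ξ) = f(x,𝐏ξ) + Φ(|ξ − 𝐏ξ|)`. -/
def fbar (Φ : ℝ → ℝ) (P : V3 → V3) (f : V3 → M33 → ℝ) : V3 → M33 → ℝ :=
  fun x ξ => f x (Pmat P ξ) + Φ (frobNorm (ξ - Pmat P ξ))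

/-- Carathéodory function: measurable in `x`, continuous in `ξ`. -/
def Caratheodory (f : V3 → M33 → ℝ) : Prop :=
  (∀ ξ, Measurable fun x => f x ξ) ∧ (∀ x, Continuous fun ξ => f x ξ)

/-- (H1): 1-periodicity in the planar variable. -/
def H1per (f : V3 → M33 → ℝ) : Prop :=
  ∀ (x : V3) (ξ : M33) (i : Fin 3), (i : ℕ) < 2 → f (x + Pi.single i 1) ξ = f x ξ

/-- (H2): `Φ`-coercivity and `Φ`-growth, for a.e. `x` and all `ξ`. -/
def H2growth (Φ : ℝ → ℝ) (α β : ℝ) (f : V3 → M33 → ℝ) : Prop :=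
  ∀ᵐ x : V3 ∂volume, ∀ ξ : M33, α * Φ (frobNorm ξ) ≤ f x ξ ∧ f x ξ ≤ β * (1 + Φ (frobNorm ξ))

/-- `ξ_α ∈ V²`: both columns of the 3×2 matrix belong to `V`. -/
def colsIn (V : Submodule ℝ V3) (ξα : M32) : Prop :=
  ∀ j : Fin 2, (fun i => ξα i j) ∈ V

/-- The open unit square `Q' = (−1/2,1/2)²`. -/
def sq2 : Set V2 := {y | |y 0| < 1 / 2 ∧ |y 1| < 1 / 2}

namespace Stmt6Aux

attribute [local instance] Matrix.frobeniusNormedAddCommGroup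

lemma frobNorm_eq_norm {m n : ℕ} (A : Matrix (Fin m) (Fin n) ℝ) : frobNorm A = ‖A‖ := by
  rw [Matrix.frobenius_norm_def, frobNorm, Real.sqrt_eq_rpow]
  norm_num [Real.norm_eq_abs, sq_abs]

lemma frobNorm_nonneg {m n : ℕ} (A : Matrix (Fin m) (Fin n) ℝ) : 0 ≤ frobNorm A :=
  Real.sqrt_nonneg _

lemma frobNorm_zero {m n : ℕ} : frobNorm (0 : Matrix (Fin m) (Fin n) ℝ) = 0 := by
  rw [frobNorm_eq_norm, norm_zero]

lemma frobNorm_add_le {m n : ℕ} (A B : Matrix (Fin m) (Fin n) ℝ) :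
    frobNorm (A + B) ≤ frobNorm A + frobNorm B := by
  simp only [frobNorm_eq_norm]; exact norm_add_le A B

lemma frobNorm_sub_rev {m n : ℕ} (A B : Matrix (Fin m) (Fin n) ℝ) :
    frobNorm (A - B) = frobNorm (B - A) := by
  simp only [frobNorm_eq_norm]; exact norm_sub_rev A B

lemma frobNorm_sub_le {m n : ℕ} (A B : Matrix (Fin m) (Fin n) ℝ) :
    frobNorm (A - B) ≤ frobNorm A + frobNorm B := by
  simp only [frobNorm_eq_norm]; exact norm_sub_le A B

lemma eq_of_frobNorm_sub_eq_zero {m n : ℕ} {A B : Matrix (Fin m) (Fin n) ℝ}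
    (h : frobNorm (A - B) = 0) : A = B := by
  rw [frobNorm_eq_norm] at h
  exact sub_eq_zero.1 (norm_eq_zero.1 h)

lemma abs_entry_le_frobNorm {m n : ℕ} (A : Matrix (Fin m) (Fin n) ℝ) (i : Fin m) (j : Fin n) :
    |A i j| ≤ frobNorm A := by
  rw [← Real.sqrt_sq_eq_abs]
  apply Real.sqrt_le_sqrt
  calc A i j ^ 2 ≤ ∑ j', A i j' ^ 2 :=
        Finset.single_le_sum (f := fun j' => A i j' ^ 2) (fun j' _ => sq_nonneg _)
          (Finset.mem_univ j)
    _ ≤ ∑ i', ∑ j', A i' j' ^ 2 :=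
        Finset.single_le_sum (f := fun i' => ∑ j', A i' j' ^ 2)
          (fun i' _ => Finset.sum_nonneg fun j' _ => sq_nonneg _) (Finset.mem_univ i)

lemma frobNorm_le_of_entries {K : ℝ} (hK : 0 ≤ K) (A : M33)
    (h : ∀ i j, |A i j| ≤ K) : frobNorm A ≤ 3 * K := by
  have hsum : ∑ i, ∑ j, (A i j)^2 ≤ 9 * K^2 := by
    have h' : ∀ i j, (A i j)^2 ≤ K^2 := fun i j => by
      rw [← sq_abs]; exact pow_le_pow_left₀ (abs_nonneg _) (h i j) 2
    calc ∑ i, ∑ j, (A i j)^2 ≤ ∑ _i : Fin 3, ∑ _j : Fin 3, K^2 := by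
          apply Finset.sum_le_sum; intro i _; apply Finset.sum_le_sum; intro j _; exact h' i j
      _ = 9 * K^2 := by simp [Fin.sum_univ_three]; ring
  calc frobNorm A ≤ Real.sqrt (9*K^2) := Real.sqrt_le_sqrt hsum
    _ = 3*K := by rw [show (9:ℝ)*K^2 = (3*K)^2 by ring, Real.sqrt_sq (by positivity)]

def Emb (ξ : M32) : M33 := Matrix.of fun i j => if h : (j:ℕ) < 2 then ξ i ⟨j, h⟩ else 0

lemma withCol_eq (ξ : M32) (A : M33) : withCol ξ A = Emb ξ + A := by
  ext i j; simp [withCol, Emb, Matrix.add_apply]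

lemma frobNorm_Emb (ξ : M32) : frobNorm (Emb ξ) = frobNorm ξ := by
  unfold frobNorm Emb
  congr 1
  apply Finset.sum_congr rfl
  intro i _
  rw [Fin.sum_univ_three, Fin.sum_univ_two]
  norm_num [Matrix.of_apply]

lemma frobNorm_withCol_le (ξ : M32) (A : M33) :
    frobNorm (withCol ξ A) ≤ frobNorm ξ + frobNorm A := by
  rw [withCol_eq, ← frobNorm_Emb ξ]; exact frobNorm_add_le _ _

lemma withCol_zero_eq (ξ : M32) : withCol ξ 0 = Emb ξ := by
  rw [withCol_eq, add_zero]

section Young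

variable {Φ ph : ℝ → ℝ}

lemma ph_nn (hmono : MonotoneOn ph (Set.Ici 0)) (h0 : ph 0 = 0) :
    ∀ s, 0 ≤ s → 0 ≤ ph s :=
  fun s hs => h0 ▸ hmono (Set.mem_Ici.2 le_rfl) hs hs

lemma ph_ii (hmono : MonotoneOn ph (Set.Ici 0)) {a b : ℝ} (ha : 0 ≤ a) (hb : 0 ≤ b) :
    IntervalIntegrable ph volume a b := by
  apply MonotoneOn.intervalIntegrable
  apply hmono.mono
  intro x hx
  rcases Set.mem_uIcc.1 hx with h | h
  · exact le_trans ha h.1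
  · exact le_trans hb h.1

lemma Phi_int (hrep : ∀ t : ℝ, 0 ≤ t → Φ t = ∫ s in (0:ℝ)..t, ph s)
    (hmono : MonotoneOn ph (Set.Ici 0)) {a b : ℝ} (ha : 0 ≤ a) (hab : a ≤ b) :
    Φ b = Φ a + ∫ s in a..b, ph s := by
  rw [hrep a ha, hrep b (ha.trans hab)]
  rw [intervalIntegral.integral_add_adjacent_intervals (ph_ii hmono le_rfl ha)
    (ph_ii hmono ha (ha.trans hab))]

lemma Phi_nn (hrep : ∀ t : ℝ, 0 ≤ t → Φ t = ∫ s in (0:ℝ)..t, ph s)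
    (hmono : MonotoneOn ph (Set.Ici 0)) (h0 : ph 0 = 0) {a : ℝ} (ha : 0 ≤ a) : 0 ≤ Φ a := by
  rw [hrep a ha]
  exact intervalIntegral.integral_nonneg ha (fun u hu => ph_nn hmono h0 u hu.1)

lemma Phi_mono (hrep : ∀ t : ℝ, 0 ≤ t → Φ t = ∫ s in (0:ℝ)..t, ph s)
    (hmono : MonotoneOn ph (Set.Ici 0)) (h0 : ph 0 = 0) {a b : ℝ} (ha : 0 ≤ a) (hab : a ≤ b) :
    Φ a ≤ Φ b := by
  rw [Phi_int hrep hmono ha hab]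
  have : 0 ≤ ∫ s in a..b, ph s :=
    intervalIntegral.integral_nonneg hab (fun u hu => ph_nn hmono h0 u (ha.trans hu.1))
  linarith

lemma Phi_le_mul (hrep : ∀ t : ℝ, 0 ≤ t → Φ t = ∫ s in (0:ℝ)..t, ph s)
    (hmono : MonotoneOn ph (Set.Ici 0)) {a : ℝ} (ha : 0 ≤ a) : Φ a ≤ a * ph a := by
  rw [hrep a ha]
  calc (∫ s in (0:ℝ)..a, ph s) ≤ ∫ _s in (0:ℝ)..a, ph a := by
        apply intervalIntegral.integral_mono_on ha (ph_ii hmono le_rfl ha)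
          intervalIntegrable_const
        intro u hu
        exact hmono hu.1 ha hu.2
    _ = a * ph a := by simp [intervalIntegral.integral_const, smul_eq_mul]

lemma mul_ph_le_Phi (hrep : ∀ t : ℝ, 0 ≤ t → Φ t = ∫ s in (0:ℝ)..t, ph s)
    (hmono : MonotoneOn ph (Set.Ici 0)) (h0 : ph 0 = 0) {a : ℝ} (ha : 0 ≤ a) :
    a * ph a ≤ Φ (2*a) := by
  have h1 : Φ (2*a) = Φ a + ∫ s in a..(2*a), ph s := Phi_int hrep hmono ha (by linarith)
  have h2 : (∫ _s in a..(2*a), ph a) ≤ ∫ s in a..(2*a), ph s := by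
    apply intervalIntegral.integral_mono_on (by linarith) intervalIntegrable_const
      (ph_ii hmono ha (by linarith))
    intro u hu
    exact hmono ha (ha.trans hu.1) hu.1
  have h3 : (∫ _s in a..(2*a), ph a) = a * ph a := by
    rw [intervalIntegral.integral_const, smul_eq_mul]; ring
  have h4 : 0 ≤ Φ a := Phi_nn hrep hmono h0 ha
  linarith

lemma ph_key (hrep : ∀ t : ℝ, 0 ≤ t → Φ t = ∫ s in (0:ℝ)..t, ph s)
    (hmono : MonotoneOn ph (Set.Ici 0)) (h0 : ph 0 = 0) (hΔ : Delta2 Φ) :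
    ∃ C₃ : ℝ, 0 < C₃ ∧ ∀ S, 0 ≤ S → ph (19*(S+1)) ≤ C₃ * (1 + ph S) := by
  obtain ⟨a, _ha, t₀, ht₀, hd⟩ := hΔ
  set a' := max a 1 with ha'def
  have ha'1 : (1:ℝ) ≤ a' := le_max_right _ _
  have hdd : ∀ u, t₀ ≤ u → 0 ≤ u → Φ (2*u) ≤ a' * Φ u := by
    intro u h1 h2
    have hp := Phi_nn hrep hmono h0 h2
    have := hd u h1
    nlinarith [le_max_left a 1]
  have hpow : ∀ k : ℕ, ∀ u, t₀ ≤ u → 0 ≤ u → Φ (2^k * u) ≤ a'^k * Φ u := by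
    intro k
    induction k with
    | zero => intro u _ _; simp
    | succ n ih =>
      intro u h1 h2
      have h2n : (1:ℝ) ≤ 2^n := one_le_pow₀ (by norm_num)
      have hu' : t₀ ≤ 2^n * u := le_trans h1 (by nlinarith)
      have hstep : Φ (2*(2^n*u)) ≤ a' * Φ (2^n*u) := hdd _ hu' (by positivity)
      have hih := ih u h1 h2
      have ha'nn : (0:ℝ) ≤ a'^n := by positivity
      calc Φ (2^(n+1) * u) = Φ (2*(2^n*u)) := by ring_nf
        _ ≤ a' * Φ (2^n*u) := hstep
        _ ≤ a' * (a'^n * Φ u) := by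
            apply mul_le_mul_of_nonneg_left hih (by linarith)
        _ = a'^(n+1) * Φ u := by ring
  set M := max t₀ 1 with hMdef
  have hM1 : (1:ℝ) ≤ M := le_max_right _ _
  refine ⟨max (a'^7) (ph (19*(M+1)) + 1), lt_of_lt_of_le one_pos
    (le_trans (one_le_pow₀ ha'1) (le_max_left _ _)), ?_⟩
  intro S hS
  set C₃ := max (a'^7) (ph (19*(M+1)) + 1) with hC₃def
  have hC₃nn : 0 ≤ C₃ := le_trans (by positivity : (0:ℝ) ≤ a'^7) (le_max_left _ _)
  have hphS : 0 ≤ ph S := ph_nn hmono h0 S hS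
  rcases le_or_gt M S with hMS | hSM
  · have hS1 : (1:ℝ) ≤ S := le_trans hM1 hMS
    have hSt₀ : t₀ ≤ S := le_trans (le_max_left _ _) hMS
    have h1 : ph (19*(S+1)) ≤ ph (64*S) := by
      apply hmono (Set.mem_Ici.2 (by nlinarith)) (Set.mem_Ici.2 (by nlinarith))
      nlinarith
    have h2 : 64*S * ph (64*S) ≤ Φ (128*S) := by
      have := mul_ph_le_Phi hrep hmono h0 (a := 64*S) (by positivity)
      calc 64*S * ph (64*S) ≤ Φ (2*(64*S)) := this
        _ = Φ (128*S) := by ring_nf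
    have h3 : Φ (128*S) ≤ a'^7 * Φ S := by
      have := hpow 7 S hSt₀ (by linarith)
      calc Φ (128*S) = Φ (2^7 * S) := by norm_num
        _ ≤ a'^7 * Φ S := this
    have h4 : Φ S ≤ S * ph S := Phi_le_mul hrep hmono (by linarith)
    have h5 : ph (64*S) ≤ a'^7 * ph S := by
      have hph64 : 0 ≤ ph (64*S) := ph_nn hmono h0 _ (by positivity)
      have ha7 : (1:ℝ) ≤ a'^7 := one_le_pow₀ ha'1
      nlinarith
    calc ph (19*(S+1)) ≤ a'^7 * ph S := h1.trans h5
      _ ≤ C₃ * (1 + ph S) := by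
          have : a'^7 ≤ C₃ := le_max_left _ _
          nlinarith
  · have h1 : ph (19*(S+1)) ≤ ph (19*(M+1)) := by
      apply hmono (Set.mem_Ici.2 (by nlinarith)) (Set.mem_Ici.2 (by nlinarith))
      nlinarith
    have h2 : ph (19*(M+1)) ≤ C₃ := le_trans (by linarith) (le_max_right (a'^7) _)
    calc ph (19*(S+1)) ≤ C₃ := h1.trans h2
      _ ≤ C₃ * (1 + ph S) := by nlinarith

end Young
end Stmt6Aux

namespace Stmt6Aux

instance instMSM33 : MeasurableSpace M33 := inferInstanceAs (MeasurableSpace (Fin 3 → Fin 3 → ℝ))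
instance instBSM33 : BorelSpace M33 := inferInstanceAs (BorelSpace (Fin 3 → Fin 3 → ℝ))
instance instSCM33 : SecondCountableTopology M33 :=
  inferInstanceAs (SecondCountableTopology (Fin 3 → Fin 3 → ℝ))
instance instPMM33 : TopologicalSpace.PseudoMetrizableSpace M33 :=
  inferInstanceAs (TopologicalSpace.PseudoMetrizableSpace (Fin 3 → Fin 3 → ℝ))
instance instMM33 : TopologicalSpace.MetrizableSpace M33 :=
  inferInstanceAs (TopologicalSpace.MetrizableSpace (Fin 3 → Fin 3 → ℝ))

lemma cara_comp {f : V3 → M33 → ℝ} (hf : Caratheodory f) {g : V3 → M33}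
    (hg : Measurable g) : Measurable fun x => f x (g x) := by
  have h := measurable_uncurry_of_continuous_of_measurable (u := fun ξ x => f x ξ) hf.2 hf.1
  exact h.comp (hg.prodMk measurable_id)

lemma measurable_gradm (φ : V3 → V3) : Measurable (gradm φ) := by
  refine measurable_pi_iff.2 fun i => measurable_pi_iff.2 fun j => ?_
  simp only [gradm, Matrix.of_apply]
  exact (measurable_pi_apply i).comp (measurable_fderiv_apply_const ℝ φ (Pi.single j 1))

lemma measurable_withCol (ξ : M32) (φ : V3 → V3) :
    Measurable fun x => withCol ξ (gradm φ x) := by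
  refine measurable_pi_iff.2 fun i => measurable_pi_iff.2 fun j => ?_
  simp only [withCol, Matrix.of_apply]
  apply Measurable.const_add
  simp only [gradm, Matrix.of_apply]
  exact (measurable_pi_apply i).comp (measurable_fderiv_apply_const ℝ φ (Pi.single j 1))

lemma gradm_entry_le {K : NNReal} {φ : V3 → V3} (h : LipschitzWith K φ) (x : V3)
    (i j : Fin 3) : |gradm φ x i j| ≤ K := by
  have h1 : |gradm φ x i j| = ‖(fderiv ℝ φ x (Pi.single j 1)) i‖ := by
    rw [Real.norm_eq_abs]; rfl
  rw [h1]
  calc ‖(fderiv ℝ φ x (Pi.single j 1)) i‖ ≤ ‖fderiv ℝ φ x (Pi.single j 1)‖ :=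
        norm_le_pi_norm _ i
    _ ≤ ‖fderiv ℝ φ x‖ * ‖(Pi.single j 1 : V3)‖ := (fderiv ℝ φ x).le_opNorm _
    _ ≤ K * 1 := by
        apply mul_le_mul (norm_fderiv_le_of_lipschitz ℝ h) ?_ (norm_nonneg _) K.coe_nonneg
        rw [Pi.norm_single]; norm_num
    _ = K := mul_one _

lemma frob_gradm_le {K : NNReal} {φ : V3 → V3} (h : LipschitzWith K φ) (x : V3) :
    frobNorm (gradm φ x) ≤ 3 * K :=
  frobNorm_le_of_entries K.coe_nonneg _ (gradm_entry_le h x)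

lemma gradm_zeroMap (x : V3) : gradm (fun _ => (0:V3)) x = 0 := by
  ext i j
  simp [gradm, fderiv_const]

end Stmt6Aux

namespace Stmt6Aux

lemma openCyl_isOpen (t : ℝ) : IsOpen (openCyl t) := by
  have h : openCyl t
      = ((fun x : V3 => |x 0|) ⁻¹' Set.Iio (t/2)) ∩ (((fun x : V3 => |x 1|) ⁻¹' Set.Iio (t/2))
        ∩ ((fun x : V3 => |x 2|) ⁻¹' Set.Iio (1/2))) := by
    ext x; simp [openCyl, Set.mem_setOf_eq]
  rw [h]
  exact (isOpen_Iio.preimage ((continuous_apply 0).abs)).inter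
    ((isOpen_Iio.preimage ((continuous_apply 1).abs)).inter
      (isOpen_Iio.preimage ((continuous_apply 2).abs)))

lemma measurableSet_openCyl (t : ℝ) : MeasurableSet (openCyl t) :=
  (openCyl_isOpen t).measurableSet

lemma volume_openCyl {t : ℝ} (ht : 0 ≤ t) : volume (openCyl t) = ENNReal.ofReal (t^2) := by
  have h : openCyl t = Set.pi Set.univ
      (![Set.Ioo (-(t/2)) (t/2), Set.Ioo (-(t/2)) (t/2), Set.Ioo (-(1/2):ℝ) (1/2)]) := by
    ext x
    simp only [openCyl, Set.mem_setOf_eq, Set.mem_pi, Set.mem_univ, true_implies]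
    constructor
    · rintro ⟨h0, h1, h2⟩ i
      fin_cases i
      · simpa [Set.mem_Ioo] using abs_lt.1 h0
      · simpa [Set.mem_Ioo] using abs_lt.1 h1
      · simpa [Set.mem_Ioo] using abs_lt.1 h2
    · intro h
      have h0 := h 0; have h1 := h 1; have h2 := h 2
      simp only [Matrix.cons_val_zero, Matrix.cons_val_one, Matrix.head_cons,
        Matrix.cons_val_two, Matrix.tail_cons, Set.mem_Ioo] at h0 h1 h2
      exact ⟨abs_lt.2 ⟨by linarith [h0.1], h0.2⟩, abs_lt.2 ⟨by linarith [h1.1], h1.2⟩,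
        abs_lt.2 ⟨by linarith [h2.1], h2.2⟩⟩
  rw [h, volume_pi_pi, Fin.prod_univ_three]
  simp only [Matrix.cons_val_zero, Matrix.cons_val_one, Matrix.head_cons,
    Matrix.cons_val_two, Matrix.tail_cons]
  simp only [Real.volume_Ioo]
  rw [show t/2 - -(t/2) = t by ring, show (1:ℝ)/2 - -(1/2) = 1 by ring]
  rw [← ENNReal.ofReal_mul ht, ← ENNReal.ofReal_mul (by nlinarith : (0:ℝ) ≤ t*t)]
  rw [show t*t*1 = t^2 by ring]

lemma volume_openCyl_lt_top {t : ℝ} : volume (openCyl t) < ⊤ := by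
  rcases le_or_gt t 0 with h | h
  · have : openCyl t ⊆ openCyl 1 ∪ openCyl 1 := by
      intro x hx
      exfalso
      have := hx.1
      have : (0:ℝ) ≤ |x 0| := abs_nonneg _
      linarith [hx.1]
    calc volume (openCyl t) ≤ volume (openCyl 1 ∪ openCyl 1) := measure_mono this
      _ ≤ volume (openCyl 1) + volume (openCyl 1) := measure_union_le _ _
      _ < ⊤ := by rw [volume_openCyl (by norm_num : (0:ℝ) ≤ 1)]; simp
  · rw [volume_openCyl h.le]; exact ENNReal.ofReal_lt_top

lemma hyperplane_null (i : Fin 3) (a : ℝ) : (volume : Measure V3) {x | x i = a} = 0 := by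
  rw [MeasureTheory.volume_pi]
  exact MeasureTheory.Measure.pi_hyperplane (fun _ => (volume : Measure ℝ)) i a

lemma mid_null (c : ℝ) : (volume : Measure V3) {x | max |x 0| |x 1| = c} = 0 := by
  have hsub : {x : V3 | max |x 0| |x 1| = c} ⊆
      ({x : V3 | x 0 = c} ∪ {x : V3 | x 0 = -c}) ∪ ({x : V3 | x 1 = c} ∪ {x : V3 | x 1 = -c}) := by
    intro x hx
    have hx' : max |x 0| |x 1| = c := hx
    rcases max_choice |x 0| |x 1| with h | h
    · have habs : |x 0| = c := by rw [← h]; exact hx'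
      rcases abs_cases (x 0) with ⟨h1, _⟩ | ⟨h1, _⟩
      · exact Or.inl (Or.inl (by rw [h1] at habs; exact habs))
      · refine Or.inl (Or.inr ?_)
        show x 0 = -c
        rw [h1] at habs; linarith
    · have habs : |x 1| = c := by rw [← h]; exact hx'
      rcases abs_cases (x 1) with ⟨h1, _⟩ | ⟨h1, _⟩
      · exact Or.inr (Or.inl (by rw [h1] at habs; exact habs))
      · refine Or.inr (Or.inr ?_)
        show x 1 = -c
        rw [h1] at habs; linarith
  apply measure_mono_null hsub
  apply measure_union_null <;> apply measure_union_null <;>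
    first
      | exact hyperplane_null 0 c
      | exact hyperplane_null 0 (-c)
      | exact hyperplane_null 1 c
      | exact hyperplane_null 1 (-c)

end Stmt6Aux

namespace Stmt6Aux

section Cell

variable {f : V3 → M33 → ℝ} {Φ : ℝ → ℝ} {α β : ℝ}

lemma integrand_nonneg (hα : 0 < α) (hΦnn : ∀ a, 0 ≤ a → 0 ≤ Φ a)
    (hf2 : H2growth Φ α β f) (ξ : M32) (φ : V3 → V3) :
    ∀ᵐ x : V3 ∂volume, 0 ≤ f x (withCol ξ (gradm φ x)) := by
  filter_upwards [hf2] with x hx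
  have h := (hx (withCol ξ (gradm φ x))).1
  have h2 : 0 ≤ α * Φ (frobNorm (withCol ξ (gradm φ x))) :=
    mul_nonneg hα.le (hΦnn _ (frobNorm_nonneg _))
  linarith

lemma cellE_nonneg (hα : 0 < α) (hΦnn : ∀ a, 0 ≤ a → 0 ≤ Φ a)
    (hf2 : H2growth Φ α β f) (ξ : M32) (t : ℝ) (φ : V3 → V3) : 0 ≤ cellE f ξ t φ :=
  integral_nonneg_of_ae (ae_restrict_of_ae (integrand_nonneg hα hΦnn hf2 ξ φ))

lemma zeroMap_mem (t : ℝ) (V : Submodule ℝ V3) : (fun _ => (0:V3)) ∈ AdmVSet t V :=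
  ⟨⟨⟨0, LipschitzWith.const 0⟩, fun _ _ => rfl⟩, fun _ => V.zero_mem⟩

lemma bddBelow_cell (hα : 0 < α) (hΦnn : ∀ a, 0 ≤ a → 0 ≤ Φ a)
    (hf2 : H2growth Φ α β f) (ξ : M32) (t : ℝ) (S : Set (V3 → V3)) :
    BddBelow ((fun φ => cellE f ξ t φ) '' S) := by
  refine ⟨0, fun y hy => ?_⟩
  obtain ⟨φ, _, rfl⟩ := hy
  exact cellE_nonneg hα hΦnn hf2 ξ t φ

lemma cellInf_nonneg (hα : 0 < α) (hΦnn : ∀ a, 0 ≤ a → 0 ≤ Φ a)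
    (hf2 : H2growth Φ α β f) (ξ : M32) (t : ℝ) (V : Submodule ℝ V3) :
    0 ≤ cellInf f ξ t (AdmVSet t V) := by
  have hne : ((fun φ => cellE f ξ t φ) '' (AdmVSet t V)).Nonempty :=
    ⟨cellE f ξ t (fun _ => 0), ⟨(fun _ => (0:V3)), zeroMap_mem t V, rfl⟩⟩
  apply le_csInf hne
  rintro b ⟨φ, _, rfl⟩
  exact cellE_nonneg hα hΦnn hf2 ξ t φ

lemma cellInf_le_cellE (hα : 0 < α) (hΦnn : ∀ a, 0 ≤ a → 0 ≤ Φ a)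
    (hf2 : H2growth Φ α β f) (ξ : M32) (t : ℝ) (V : Submodule ℝ V3)
    {φ : V3 → V3} (hmem : φ ∈ AdmVSet t V) :
    cellInf f ξ t (AdmVSet t V) ≤ cellE f ξ t φ :=
  csInf_le (bddBelow_cell hα hΦnn hf2 ξ t _) ⟨φ, hmem, rfl⟩

lemma key_int (hf : Caratheodory f) (hf2 : H2growth Φ α β f) (hα : 0 < α) (hβ : 0 ≤ β)
    (hΦnn : ∀ a, 0 ≤ a → 0 ≤ Φ a) (hΦmono : ∀ a b, 0 ≤ a → a ≤ b → Φ a ≤ Φ b)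
    {g : V3 → M33} (hg : Measurable g) {R : ℝ} (hR0 : 0 ≤ R) {s : Set V3}
    (hR : ∀ᵐ x ∂(volume.restrict s), frobNorm (g x) ≤ R) (hs : volume s < ⊤) :
    IntegrableOn (fun x => f x (g x)) s volume ∧
      (∫ x in s, f x (g x)) ≤ β * (1 + Φ R) * (volume s).toReal := by
  have hbd : ∀ᵐ x ∂(volume.restrict s), 0 ≤ f x (g x) ∧ f x (g x) ≤ β*(1+Φ R) := by
    filter_upwards [ae_restrict_of_ae hf2, hR] with x hx hxR
    have h1 := (hx (g x)).1
    have h2 := (hx (g x)).2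
    have h3 : Φ (frobNorm (g x)) ≤ Φ R := hΦmono _ _ (frobNorm_nonneg _) hxR
    have h4 : 0 ≤ Φ (frobNorm (g x)) := hΦnn _ (frobNorm_nonneg _)
    constructor
    · nlinarith
    · nlinarith
  have hmeas := cara_comp hf hg
  have hC : 0 ≤ β * (1 + Φ R) := by
    have := hΦnn R hR0
    nlinarith
  have hint : IntegrableOn (fun x => f x (g x)) s volume := by
    apply Integrable.mono' (g := fun _ => β * (1 + Φ R)) (integrableOn_const hs.ne)
      hmeas.aestronglyMeasurable
    filter_upwards [hbd] with x hx
    rw [Real.norm_eq_abs]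
    exact abs_le.2 ⟨by linarith [hx.1], hx.2⟩
  refine ⟨hint, ?_⟩
  calc (∫ x in s, f x (g x)) ≤ ∫ _x in s, β*(1+Φ R) := by
        apply integral_mono_ae hint (integrableOn_const hs.ne)
        filter_upwards [hbd] with x hx using hx.2
    _ = (volume s).toReal * (β*(1+Φ R)) := by rw [setIntegral_const, smul_eq_mul]; rfl
    _ = β*(1+Φ R)*(volume s).toReal := by ring

lemma cellE_zeroMap (ξ : M32) (t : ℝ) : cellE f ξ t (fun _ => (0:V3)) =
    ∫ x in openCyl t, f x (Emb ξ) := by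
  unfold cellE
  apply integral_congr_ae
  filter_upwards with x
  rw [gradm_zeroMap, withCol_zero_eq]

lemma scaled_cellInf_le (hf : Caratheodory f) (hf2 : H2growth Φ α β f) (hα : 0 < α)
    (hβ : 0 ≤ β) (hΦnn : ∀ a, 0 ≤ a → 0 ≤ Φ a) (hΦmono : ∀ a b, 0 ≤ a → a ≤ b → Φ a ≤ Φ b)
    (ξ : M32) (V : Submodule ℝ V3) {t : ℝ} (ht : 0 < t) :
    (t^2)⁻¹ * cellInf f ξ t (AdmVSet t V) ≤ β * (1 + Φ (frobNorm ξ)) := by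
  have hk := key_int hf hf2 hα hβ hΦnn hΦmono (g := fun _ => Emb ξ) measurable_const
    (frobNorm_nonneg ξ) (s := openCyl t)
    (Filter.Eventually.of_forall fun x => by rw [frobNorm_Emb])
    volume_openCyl_lt_top
  have h1 : cellInf f ξ t (AdmVSet t V) ≤ β * (1 + Φ (frobNorm ξ)) * t^2 := by
    calc cellInf f ξ t (AdmVSet t V) ≤ cellE f ξ t (fun _ => 0) :=
          cellInf_le_cellE hα hΦnn hf2 ξ t V (zeroMap_mem t V)
      _ = ∫ x in openCyl t, f x (Emb ξ) := cellE_zeroMap ξ t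
      _ ≤ β * (1 + Φ (frobNorm ξ)) * (volume (openCyl t)).toReal := hk.2
      _ = β * (1 + Φ (frobNorm ξ)) * t^2 := by
          rw [volume_openCyl ht.le, ENNReal.toReal_ofReal (by positivity)]
  have ht2 : (0:ℝ) < t^2 := by positivity
  calc (t^2)⁻¹ * cellInf f ξ t (AdmVSet t V) ≤ (t^2)⁻¹ * (β * (1 + Φ (frobNorm ξ)) * t^2) :=
        mul_le_mul_of_nonneg_left h1 (by positivity)
    _ = β * (1 + Φ (frobNorm ξ)) := by field_simp

end Cell
end Stmt6Aux

namespace Stmt6Aux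

section Constr

def cl (r u : ℝ) : ℝ := max (-r) (min r u)

lemma cl_dist_le (r u v : ℝ) : |cl r u - cl r v| ≤ |u - v| := by
  have h1 : |cl r u - cl r v| ≤ |min r u - min r v| := by
    rw [cl, cl, max_comm (-r) (min r u), max_comm (-r) (min r v)]
    exact abs_max_sub_max_le_abs _ _ _
  have h2 : |min r u - min r v| ≤ |u - v| := by
    have := abs_min_sub_min_le_max r u r v
    simpa using this
  linarith

lemma cl_eq_self {r u : ℝ} (h : |u| ≤ r) : cl r u = u := by
  rw [cl, min_eq_right (abs_le.1 h).2, max_eq_right (abs_le.1 h).1]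

lemma abs_cl_le {r u : ℝ} (hr : 0 ≤ r) : |cl r u| ≤ r := by
  apply abs_le.2
  exact ⟨le_max_left _ _, max_le (by linarith) (min_le_left _ _)⟩

lemma abs_cl_eq {r u : ℝ} (hr : 0 ≤ r) (h : r ≤ |u|) : |cl r u| = r := by
  rcases abs_cases u with ⟨h1, h2⟩ | ⟨h1, h2⟩
  · rw [h1] at h
    rw [cl, min_eq_left h, max_eq_right (by linarith), abs_of_nonneg hr]
  · rw [h1] at h
    rw [cl, min_eq_right (by linarith), max_eq_left (by linarith), abs_neg, abs_of_nonneg hr]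

def m2 (x : V3) : ℝ := max |x 0| |x 1|

lemma m2_dist_le (x y : V3) : |m2 x - m2 y| ≤ dist x y := by
  have h := abs_max_sub_max_le_max |x 0| |x 1| |y 0| |y 1|
  have h0 : abs (|x 0| - |y 0|) ≤ |x 0 - y 0| := abs_abs_sub_abs_le_abs_sub _ _
  have h1 : abs (|x 1| - |y 1|) ≤ |x 1 - y 1| := abs_abs_sub_abs_le_abs_sub _ _
  have d0 : |x 0 - y 0| ≤ dist x y := by
    have := dist_le_pi_dist x y 0; rwa [Real.dist_eq] at this
  have d1 : |x 1 - y 1| ≤ dist x y := by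
    have := dist_le_pi_dist x y 1; rwa [Real.dist_eq] at this
  calc |m2 x - m2 y| ≤ max (abs (|x 0| - |y 0|)) (abs (|x 1| - |y 1|)) := h
    _ ≤ dist x y := max_le (h0.trans d0) (h1.trans d1)

def clampPl (r : ℝ) : V3 → V3 := fun x i => if (i:ℕ) < 2 then cl r (x i) else x i

lemma clampPl_lip (r : ℝ) : LipschitzWith 1 (clampPl r) := by
  apply LipschitzWith.of_dist_le_mul
  intro x y
  rw [NNReal.coe_one, one_mul, dist_pi_le_iff dist_nonneg]
  intro i
  by_cases h : (i:ℕ) < 2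
  · simp only [clampPl, h, if_true]
    rw [Real.dist_eq]
    refine (cl_dist_le _ _ _).trans ?_
    have := dist_le_pi_dist x y i; rwa [Real.dist_eq] at this
  · simp only [clampPl, h, if_false]
    exact dist_le_pi_dist x y i

lemma clampPl_eq_self {r : ℝ} {x : V3} (h0 : |x 0| ≤ r) (h1 : |x 1| ≤ r) :
    clampPl r x = x := by
  funext i
  fin_cases i <;> simp [clampPl, cl_eq_self h0, cl_eq_self h1]

lemma clampPl_apply_two (r : ℝ) (x : V3) : clampPl r x 2 = x 2 := by simp [clampPl]

lemma clampPl_m2 {r : ℝ} (hr : 0 ≤ r) {x : V3} (h : r ≤ m2 x) : m2 (clampPl r x) = r := by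
  have e0 : clampPl r x 0 = cl r (x 0) := by simp [clampPl]
  have e1 : clampPl r x 1 = cl r (x 1) := by simp [clampPl]
  rw [m2, e0, e1]
  rcases le_total (|x 0|) (|x 1|) with hc | hc
  · have hr1 : r ≤ |x 1| := by rw [m2, max_eq_right hc] at h; exact h
    have h1 : |cl r (x 1)| = r := abs_cl_eq hr hr1
    refine le_antisymm (max_le (abs_cl_le hr) h1.le) ?_
    conv_lhs => rw [← h1]
    exact le_max_right _ _
  · have hr0 : r ≤ |x 0| := by rw [m2, max_eq_left hc] at h; exact h
    have h0 : |cl r (x 0)| = r := abs_cl_eq hr hr0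
    refine le_antisymm (max_le h0.le (abs_cl_le hr)) ?_
    conv_lhs => rw [← h0]
    exact le_max_left _ _

def eta (t δ : ℝ) (x : V3) : ℝ := max 0 (min 1 ((t/2 - m2 x)/δ))

lemma eta_nonneg (t δ : ℝ) (x : V3) : 0 ≤ eta t δ x := le_max_left _ _

lemma eta_le_one (t δ : ℝ) (x : V3) : eta t δ x ≤ 1 := max_le zero_le_one (min_le_left _ _)

lemma eta_dist_le {δ : ℝ} (hδ : 0 < δ) (t : ℝ) (x y : V3) :
    |eta t δ x - eta t δ y| ≤ δ⁻¹ * dist x y := by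
  have ha : |eta t δ x - eta t δ y|
      ≤ |min 1 ((t/2 - m2 x)/δ) - min 1 ((t/2 - m2 y)/δ)| := by
    rw [eta, eta, max_comm (0:ℝ) (min 1 ((t/2 - m2 x)/δ)), max_comm (0:ℝ) (min 1 ((t/2 - m2 y)/δ))]
    exact abs_max_sub_max_le_abs _ _ _
  have hb : |min 1 ((t/2 - m2 x)/δ) - min 1 ((t/2 - m2 y)/δ)|
      ≤ |(t/2 - m2 x)/δ - (t/2 - m2 y)/δ| := by
    have h' := abs_min_sub_min_le_max (1:ℝ) ((t/2 - m2 x)/δ) 1 ((t/2 - m2 y)/δ)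
    rw [sub_self, abs_zero, max_eq_right (abs_nonneg _)] at h'
    exact h'
  have hc : (t/2 - m2 x)/δ - (t/2 - m2 y)/δ = (m2 y - m2 x)/δ := by ring
  calc |eta t δ x - eta t δ y| ≤ |(t/2 - m2 x)/δ - (t/2 - m2 y)/δ| := ha.trans hb
    _ = |m2 y - m2 x| / δ := by rw [hc, abs_div, abs_of_pos hδ]
    _ = |m2 x - m2 y| / δ := by rw [abs_sub_comm]
    _ ≤ dist x y / δ := (div_le_div_iff_of_pos_right hδ).2 (m2_dist_le x y)
    _ = δ⁻¹ * dist x y := by ring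

end Constr
end Stmt6Aux

namespace Stmt6Aux
section Constr2

lemma eta_eq_one {s t : ℝ} (hs : 0 < s) (hst : s < t) {x : V3} (hm : m2 x ≤ s/2) :
    eta t ((t-s)/2) x = 1 := by
  have hδ : 0 < (t-s)/2 := by linarith
  have h1 : (1:ℝ) ≤ (t/2 - m2 x)/((t-s)/2) := by
    rw [le_div_iff₀ hδ]
    linarith
  rw [eta, min_eq_left h1, max_eq_right zero_le_one]

lemma eta_eq_zero {t : ℝ} (δ : ℝ) {x : V3} (hm : m2 x = t/2) :
    eta t δ x = 0 := by
  rw [eta, hm, sub_self, zero_div, min_eq_right zero_le_one, max_self]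

def corr (Δ : M32) (t : ℝ) (x : V3) : V3 :=
  fun i => ∑ j : Fin 2, Δ i j * cl (t/2) (x j.castSucc)

lemma corr_dist_le (Δ : M32) (t : ℝ) (x y : V3) :
    dist (corr Δ t x) (corr Δ t y) ≤ 2 * frobNorm Δ * dist x y := by
  have hnn : 0 ≤ 2 * frobNorm Δ * dist x y :=
    mul_nonneg (mul_nonneg (by norm_num) (frobNorm_nonneg _)) dist_nonneg
  rw [dist_pi_le_iff hnn]
  intro i
  rw [Real.dist_eq]
  have hdec : corr Δ t x i - corr Δ t y i
      = ∑ j : Fin 2, Δ i j * (cl (t/2) (x j.castSucc) - cl (t/2) (y j.castSucc)) := by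
    rw [corr, corr, ← Finset.sum_sub_distrib]
    apply Finset.sum_congr rfl
    intro j _
    ring
  rw [hdec]
  calc |∑ j : Fin 2, Δ i j * (cl (t/2) (x j.castSucc) - cl (t/2) (y j.castSucc))|
      ≤ ∑ j : Fin 2, |Δ i j * (cl (t/2) (x j.castSucc) - cl (t/2) (y j.castSucc))| :=
        Finset.abs_sum_le_sum_abs _ _
    _ ≤ ∑ _j : Fin 2, frobNorm Δ * dist x y := by
        apply Finset.sum_le_sum
        intro j _
        rw [abs_mul]
        apply mul_le_mul (abs_entry_le_frobNorm Δ i j) ?_ (abs_nonneg _) (frobNorm_nonneg _)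
        refine (cl_dist_le _ _ _).trans ?_
        have := dist_le_pi_dist x y j.castSucc
        rwa [Real.dist_eq] at this
    _ = 2 * frobNorm Δ * dist x y := by
        rw [Fin.sum_univ_two]; ring

lemma corr_norm_le (Δ : M32) {t : ℝ} (ht : 0 ≤ t) (x : V3) :
    ‖corr Δ t x‖ ≤ frobNorm Δ * t := by
  rw [pi_norm_le_iff_of_nonneg (mul_nonneg (frobNorm_nonneg _) ht)]
  intro i
  rw [Real.norm_eq_abs]
  calc |corr Δ t x i| ≤ ∑ j : Fin 2, |Δ i j * cl (t/2) (x j.castSucc)| :=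
        Finset.abs_sum_le_sum_abs _ _
    _ ≤ ∑ _j : Fin 2, frobNorm Δ * (t/2) := by
        apply Finset.sum_le_sum
        intro j _
        rw [abs_mul]
        exact mul_le_mul (abs_entry_le_frobNorm Δ i j) (abs_cl_le (by linarith))
          (abs_nonneg _) (frobNorm_nonneg _)
    _ = frobNorm Δ * t := by rw [Fin.sum_univ_two]; ring

def psi (Δ : M32) (s t : ℝ) (x : V3) : V3 := eta t ((t-s)/2) x • corr Δ t x

lemma psi_lip (Δ : M32) {s t : ℝ} (hs : 0 < s) (hst : s < t) :
    LipschitzWith (Real.toNNReal (2*frobNorm Δ + ((t-s)/2)⁻¹ * (frobNorm Δ * t)))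
      (psi Δ s t) := by
  have hδ : 0 < (t-s)/2 := by linarith
  have ht0 : 0 ≤ t := by linarith
  have hKnn : 0 ≤ 2*frobNorm Δ + ((t-s)/2)⁻¹ * (frobNorm Δ * t) := by
    have := frobNorm_nonneg Δ
    positivity
  apply LipschitzWith.of_dist_le_mul
  intro x y
  rw [Real.coe_toNNReal _ hKnn, dist_eq_norm]
  have hdecomp : psi Δ s t x - psi Δ s t y
      = eta t ((t-s)/2) x • (corr Δ t x - corr Δ t y)
        + (eta t ((t-s)/2) x - eta t ((t-s)/2) y) • corr Δ t y := by
    simp only [psi, smul_sub, sub_smul]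
    abel
  rw [hdecomp]
  calc ‖_‖ ≤ ‖eta t ((t-s)/2) x • (corr Δ t x - corr Δ t y)‖
        + ‖(eta t ((t-s)/2) x - eta t ((t-s)/2) y) • corr Δ t y‖ := norm_add_le _ _
    _ = |eta t ((t-s)/2) x| * ‖corr Δ t x - corr Δ t y‖
        + |eta t ((t-s)/2) x - eta t ((t-s)/2) y| * ‖corr Δ t y‖ := by
          rw [norm_smul, norm_smul, Real.norm_eq_abs, Real.norm_eq_abs]
    _ ≤ 1 * (2 * frobNorm Δ * dist x y) + (((t-s)/2)⁻¹ * dist x y) * (frobNorm Δ * t) := by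
        apply add_le_add
        · apply mul_le_mul
          · rw [abs_of_nonneg (eta_nonneg _ _ _)]; exact eta_le_one _ _ _
          · rw [← dist_eq_norm]; exact corr_dist_le Δ t x y
          · exact norm_nonneg _
          · norm_num
        · apply mul_le_mul (eta_dist_le hδ t x y) (corr_norm_le Δ ht0 y) (norm_nonneg _)
          exact mul_nonneg (le_of_lt (inv_pos.2 hδ)) dist_nonneg
    _ = (2*frobNorm Δ + ((t-s)/2)⁻¹ * (frobNorm Δ * t)) * dist x y := by ring

lemma psi_in_V {V : Submodule ℝ V3} {Δ : M32}
    (hΔV : ∀ j : Fin 2, (fun i => Δ i j) ∈ V) (s t : ℝ) (x : V3) : psi Δ s t x ∈ V := by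
  apply V.smul_mem
  have hco : corr Δ t x = ∑ j : Fin 2, cl (t/2) (x j.castSucc) • (fun i => Δ i j) := by
    funext i
    rw [corr, Finset.sum_apply]
    apply Finset.sum_congr rfl
    intro j _
    simp [mul_comm]
  rw [hco]
  exact Submodule.sum_mem _ fun j _ => V.smul_mem _ (hΔV j)

def LmapL (Δ : M32) : V3 →ₗ[ℝ] V3 where
  toFun := fun x i => ∑ j : Fin 2, Δ i j * x j.castSucc
  map_add' := by
    intro x y
    funext i
    simp [Pi.add_apply, mul_add, Finset.sum_add_distrib]
  map_smul' := by
    intro c x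
    funext i
    simp only [Pi.smul_apply, smul_eq_mul, RingHom.id_apply, Finset.mul_sum]
    apply Finset.sum_congr rfl
    intros
    ring

def Lmap (Δ : M32) : V3 →L[ℝ] V3 := (LmapL Δ).toContinuousLinearMap

lemma Lmap_apply (Δ : M32) (x : V3) :
    Lmap Δ x = fun i => ∑ j : Fin 2, Δ i j * x j.castSucc := rfl

lemma psi_on_inner {Δ : M32} {s t : ℝ} (hs : 0 < s) (hst : s < t) {x : V3}
    (hx0 : |x 0| ≤ s/2) (hx1 : |x 1| ≤ s/2) : psi Δ s t x = Lmap Δ x := by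
  have h1 : eta t ((t-s)/2) x = 1 := eta_eq_one hs hst (max_le hx0 hx1)
  have h2 : corr Δ t x = Lmap Δ x := by
    rw [Lmap_apply]
    funext i
    rw [corr]
    apply Finset.sum_congr rfl
    intro j _
    congr 1
    apply cl_eq_self
    fin_cases j
    · show |x 0| ≤ t/2
      linarith
    · show |x 1| ≤ t/2
      linarith
  rw [psi, h1, one_smul, h2]

lemma psi_zero_on_bdry {Δ : M32} {s t : ℝ} {x : V3} (hm : m2 x = t/2) :
    psi Δ s t x = 0 := by
  rw [psi, eta_eq_zero _ hm, zero_smul]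

lemma Lmap_single (Δ : M32) (j : Fin 3) (i : Fin 3) :
    Lmap Δ (Pi.single j 1) i = if h : (j:ℕ) < 2 then Δ i ⟨(j:ℕ), h⟩ else 0 := by
  have h0 : Lmap Δ (Pi.single j 1) i
      = ∑ j' : Fin 2, Δ i j' * ((Pi.single j 1 : V3) j'.castSucc) := rfl
  rw [h0, Fin.sum_univ_two]
  fin_cases j <;> simp [Pi.single_apply, Fin.ext_iff]

end Constr2
end Stmt6Aux

namespace Stmt6Aux

section Master

variable {f : V3 → M33 → ℝ} {Φ : ℝ → ℝ} {α β : ℝ}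

lemma master
    (hf : Caratheodory f) (hf2 : H2growth Φ α β f) (hα : 0 < α) (hβ : 0 ≤ β)
    (hΦnn : ∀ a, 0 ≤ a → 0 ≤ Φ a) (hΦmono : ∀ a b, 0 ≤ a → a ≤ b → Φ a ≤ Φ b)
    (V : Submodule ℝ V3) {ξα ξα' : M32} (hc : colsIn V ξα) (hc' : colsIn V ξα')
    {θ : ℝ} (hθ0 : 0 < θ) (hθ1 : θ ≤ 1/2)
    {B : ℝ}
    (hB : β * (1 + Φ (frobNorm ξα + 3 * (2 * frobNorm (ξα' - ξα)
      + (θ/2)⁻¹ * frobNorm (ξα' - ξα)))) ≤ B)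
    {t : ℝ} (ht : 0 < t) {ε : ℝ} (hε : 0 < ε) :
    cellInf f ξα t (AdmVSet t V) ≤ cellInf f ξα' ((1-θ)*t) (AdmVSet ((1-θ)*t) V)
      + ε + B * (t^2 - ((1-θ)*t)^2) := by
  set s := (1-θ)*t with hsdef
  have hs0 : 0 < s := by rw [hsdef]; nlinarith
  have hst : s < t := by rw [hsdef]; nlinarith
  set Δ : M32 := ξα' - ξα with hΔdef
  set D := frobNorm Δ with hDdef
  have hD0 : 0 ≤ D := frobNorm_nonneg Δ
  -- near-optimal test function for ξα' on the smaller cylinder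
  have hne : ((fun φ => cellE f ξα' s φ) '' (AdmVSet s V)).Nonempty :=
    ⟨cellE f ξα' s (fun _ => 0), ⟨(fun _ => (0:V3)), zeroMap_mem s V, rfl⟩⟩
  obtain ⟨y, hymem, hy⟩ := exists_lt_of_csInf_lt hne
    (lt_add_of_pos_right (cellInf f ξα' s (AdmVSet s V)) hε)
  obtain ⟨φ', hφ'mem, rfl⟩ := hymem
  obtain ⟨⟨⟨K', hK'⟩, hbd'⟩, hval'⟩ := hφ'mem
  -- the comparison test function
  set Kψ : ℝ := 2*D + ((t-s)/2)⁻¹ * (D*t) with hKψdef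
  have hδpos : 0 < (t-s)/2 := by linarith
  have hKψnn : 0 ≤ Kψ := by
    have h1 : 0 ≤ ((t-s)/2)⁻¹ * (D*t) :=
      mul_nonneg (le_of_lt (inv_pos.2 hδpos)) (mul_nonneg hD0 ht.le)
    rw [hKψdef]; linarith
  have hψlip := psi_lip Δ hs0 hst
  set φφ : V3 → V3 := fun x => φ' (clampPl (s/2) x) + psi Δ s t x with hφφdef
  have hφ'c : LipschitzWith (K' * 1) (fun x => φ' (clampPl (s/2) x)) :=
    hK'.comp (clampPl_lip _)
  have hφφlip : LipschitzWith (K' * 1 + Real.toNNReal Kψ) φφ := hφ'c.add hψlip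
  -- membership in the admissible class
  have hmem : φφ ∈ AdmVSet t V := by
    refine ⟨⟨⟨_, hφφlip⟩, ?_⟩, ?_⟩
    · intro x hx
      obtain ⟨hxm, hx2⟩ := hx
      have hψ0 : psi Δ s t x = 0 := psi_zero_on_bdry hxm
      have hcx : clampPl (s/2) x ∈ latBdry s := by
        constructor
        · exact clampPl_m2 (by linarith) (by rw [show m2 x = t/2 from hxm]; linarith)
        · rw [clampPl_apply_two]; exact hx2
      show φ' (clampPl (s/2) x) + psi Δ s t x = 0
      rw [hbd' _ hcx, hψ0, add_zero]
    · intro x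
      refine V.add_mem (hval' _) (psi_in_V (fun j => ?_) s t x)
      exact V.sub_mem (hc' j) (hc j)
  -- Rademacher
  have hrad : ∀ᵐ x : V3 ∂volume, DifferentiableAt ℝ φ' x := hK'.ae_differentiableAt
  -- inner region: pointwise identity at differentiability points
  have hUopen : IsOpen {x : V3 | |x 0| < s/2 ∧ |x 1| < s/2} := by
    have h : {x : V3 | |x 0| < s/2 ∧ |x 1| < s/2}
        = ((fun x : V3 => |x 0|) ⁻¹' Set.Iio (s/2)) ∩ ((fun x : V3 => |x 1|) ⁻¹' Set.Iio (s/2)) := by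
      ext x; simp [Set.mem_setOf_eq]
    rw [h]
    exact (isOpen_Iio.preimage ((continuous_apply 0).abs)).inter
      (isOpen_Iio.preimage ((continuous_apply 1).abs))
  have hinner : ∀ x, (|x 0| < s/2 ∧ |x 1| < s/2) → DifferentiableAt ℝ φ' x →
      withCol ξα (gradm φφ x) = withCol ξα' (gradm φ' x) := by
    intro x hx hdiff
    have hloc : Set.EqOn φφ (fun y => φ' y + Lmap Δ y) {x : V3 | |x 0| < s/2 ∧ |x 1| < s/2} := by
      intro y hy
      show φ' (clampPl (s/2) y) + psi Δ s t y = φ' y + Lmap Δ y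
      rw [clampPl_eq_self hy.1.le hy.2.le, psi_on_inner hs0 hst hy.1.le hy.2.le]
    have hev : φφ =ᶠ[nhds x] (fun y => φ' y + Lmap Δ y) :=
      hloc.eventuallyEq_of_mem (hUopen.mem_nhds hx)
    have hfd : fderiv ℝ φφ x = fderiv ℝ (fun y => φ' y + Lmap Δ y) x := hev.fderiv_eq
    have hfd2 : fderiv ℝ (fun y => φ' y + Lmap Δ y) x = fderiv ℝ φ' x + Lmap Δ :=
      (hdiff.hasFDerivAt.add (Lmap Δ).hasFDerivAt).fderiv
    ext i j
    simp only [withCol, Matrix.of_apply, gradm, hfd, hfd2]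
    rw [ContinuousLinearMap.add_apply, Pi.add_apply, Lmap_single]
    by_cases hj : (j:ℕ) < 2
    · simp only [hj, dif_pos, hΔdef, Matrix.sub_apply]
      ring
    · simp only [hj, dif_neg, not_false_iff]
      ring
  -- a.e. equality of integrands on the inner cylinder
  have hae_inner : ∀ᵐ x ∂(volume.restrict (openCyl s)),
      f x (withCol ξα (gradm φφ x)) = f x (withCol ξα' (gradm φ' x)) := by
    filter_upwards [ae_restrict_of_ae hrad, ae_restrict_mem (measurableSet_openCyl s)]
      with x hdiff hxmem
    rw [hinner x ⟨hxmem.1, hxmem.2.1⟩ hdiff]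
  -- frame region: gradient bound
  have hm2cont : Continuous m2 := ((continuous_apply 0).abs).max ((continuous_apply 1).abs)
  have hUfopen : IsOpen {y : V3 | s/2 < m2 y ∧ |y 2| < 1/2} := by
    have h : {y : V3 | s/2 < m2 y ∧ |y 2| < 1/2}
        = (m2 ⁻¹' Set.Ioi (s/2)) ∩ ((fun y : V3 => |y 2|) ⁻¹' Set.Iio (1/2)) := by
      ext y; simp [Set.mem_setOf_eq]
    rw [h]
    exact (isOpen_Ioi.preimage hm2cont).inter
      (isOpen_Iio.preimage ((continuous_apply 2).abs))
  have hfr : ∀ x : V3, s/2 < m2 x → |x 2| < 1/2 → ∀ i j : Fin 3,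
      |gradm φφ x i j| ≤ Kψ := by
    intro x hm hx2 i j
    have hloc : Set.EqOn φφ (psi Δ s t) {y : V3 | s/2 < m2 y ∧ |y 2| < 1/2} := by
      intro y hy
      show φ' (clampPl (s/2) y) + psi Δ s t y = psi Δ s t y
      have hcy : clampPl (s/2) y ∈ latBdry s :=
        ⟨clampPl_m2 (by linarith) hy.1.le, by rw [clampPl_apply_two]; exact hy.2⟩
      rw [hbd' _ hcy, zero_add]
    have hev : φφ =ᶠ[nhds x] psi Δ s t :=
      hloc.eventuallyEq_of_mem (hUfopen.mem_nhds ⟨hm, hx2⟩)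
    have hfd : fderiv ℝ φφ x = fderiv ℝ (psi Δ s t) x := hev.fderiv_eq
    have heq : gradm φφ x i j = gradm (psi Δ s t) x i j := by
      simp only [gradm, Matrix.of_apply, hfd]
    rw [heq]
    refine (gradm_entry_le hψlip x i j).trans ?_
    rw [Real.coe_toNNReal _ hKψnn]
  -- frame region: a.e. frobenius bound on the difference set
  set R0 : ℝ := frobNorm ξα + 3 * Kψ with hR0def
  have hR0nn : 0 ≤ R0 := by
    have := frobNorm_nonneg ξα
    rw [hR0def]; linarith
  have hDiffmeas : MeasurableSet (openCyl t \ openCyl s) :=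
    (measurableSet_openCyl t).diff (measurableSet_openCyl s)
  have haeR : ∀ᵐ x ∂(volume.restrict (openCyl t \ openCyl s)),
      frobNorm (withCol ξα (gradm φφ x)) ≤ R0 := by
    have hmid : ∀ᵐ x : V3 ∂volume, x ∉ {y : V3 | max |y 0| |y 1| = s/2} :=
      measure_eq_zero_iff_ae_notMem.1 (mid_null (s/2))
    filter_upwards [ae_restrict_of_ae hmid, ae_restrict_mem hDiffmeas] with x hxmid hxD
    have hx2 : |x 2| < 1/2 := hxD.1.2.2
    have hms : s/2 ≤ m2 x := by
      by_contra h
      push_neg at h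
      exact hxD.2 ⟨lt_of_le_of_lt (le_max_left _ _) h, lt_of_le_of_lt (le_max_right _ _) h, hx2⟩
    have hms' : s/2 < m2 x := lt_of_le_of_ne hms (fun h => hxmid h.symm)
    have hb := hfr x hms' hx2
    calc frobNorm (withCol ξα (gradm φφ x))
        ≤ frobNorm ξα + frobNorm (gradm φφ x) := frobNorm_withCol_le _ _
      _ ≤ frobNorm ξα + 3*Kψ := by
          have := frobNorm_le_of_entries hKψnn _ hb
          linarith
  -- integrability on the large cylinder
  set R1 : ℝ := frobNorm ξα + 3 * ((K' : ℝ) + Kψ) with hR1def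
  have hR1nn : 0 ≤ R1 := by
    have h1 := frobNorm_nonneg ξα
    have h2 := K'.coe_nonneg
    rw [hR1def]; nlinarith
  have hgb : ∀ x : V3, frobNorm (withCol ξα (gradm φφ x)) ≤ R1 := by
    intro x
    calc frobNorm (withCol ξα (gradm φφ x))
        ≤ frobNorm ξα + frobNorm (gradm φφ x) := frobNorm_withCol_le _ _
      _ ≤ frobNorm ξα + 3 * ((K' * 1 + Real.toNNReal Kψ : NNReal) : ℝ) := by
          have := frob_gradm_le hφφlip x
          linarith
      _ ≤ R1 := by
          rw [hR1def]
          have : ((K' * 1 + Real.toNNReal Kψ : NNReal) : ℝ) ≤ (K' : ℝ) + Kψ := by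
            push_cast
            rw [Real.coe_toNNReal _ hKψnn]
            norm_num
          linarith
  have hint_t : IntegrableOn (fun x => f x (withCol ξα (gradm φφ x))) (openCyl t) volume :=
    (key_int hf hf2 hα hβ hΦnn hΦmono (measurable_withCol ξα φφ) hR1nn
      (Filter.Eventually.of_forall hgb) volume_openCyl_lt_top).1
  -- split the integral
  have hsub : openCyl s ⊆ openCyl t := by
    intro x hx
    exact ⟨lt_of_lt_of_le hx.1 (by linarith), lt_of_lt_of_le hx.2.1 (by linarith), hx.2.2⟩
  have hunion : openCyl t = openCyl s ∪ (openCyl t \ openCyl s) :=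
    (Set.union_diff_cancel hsub).symm
  have hsplit : cellE f ξα t φφ
      = (∫ x in openCyl s, f x (withCol ξα (gradm φφ x)))
        + ∫ x in openCyl t \ openCyl s, f x (withCol ξα (gradm φφ x)) := by
    have h1 : IntegrableOn (fun x => f x (withCol ξα (gradm φφ x))) (openCyl s) volume :=
      hint_t.mono_set hsub
    have h2 : IntegrableOn (fun x => f x (withCol ξα (gradm φφ x)))
        (openCyl t \ openCyl s) volume := hint_t.mono_set Set.diff_subset
    have h3 := setIntegral_union (Set.disjoint_sdiff_right) hDiffmeas h1 h2
      (f := fun x => f x (withCol ξα (gradm φφ x))) (μ := volume)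
    have h4 : openCyl s ∪ (openCyl t \ openCyl s) = openCyl t := Set.union_diff_cancel hsub
    rw [h4] at h3
    simpa [cellE] using h3
  -- inner part
  have hinner_eq : (∫ x in openCyl s, f x (withCol ξα (gradm φφ x))) = cellE f ξα' s φ' := by
    rw [cellE]
    exact integral_congr_ae hae_inner
  -- frame part
  have hvol_diff_lt : volume (openCyl t \ openCyl s) < ⊤ :=
    lt_of_le_of_lt (measure_mono Set.diff_subset) volume_openCyl_lt_top
  have hfr_le : (∫ x in openCyl t \ openCyl s, f x (withCol ξα (gradm φφ x)))
      ≤ β * (1 + Φ R0) * (volume (openCyl t \ openCyl s)).toReal :=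
    (key_int hf hf2 hα hβ hΦnn hΦmono (measurable_withCol ξα φφ) hR0nn haeR hvol_diff_lt).2
  have hvolDiff : (volume (openCyl t \ openCyl s)).toReal = t^2 - s^2 := by
    rw [measure_diff hsub (measurableSet_openCyl s).nullMeasurableSet
      (ne_of_lt volume_openCyl_lt_top), volume_openCyl ht.le, volume_openCyl hs0.le]
    rw [← ENNReal.ofReal_sub _ (sq_nonneg s)]
    exact ENNReal.toReal_ofReal (by nlinarith)
  -- the constant comparison
  have hconst : β * (1 + Φ R0) ≤ B := by
    refine le_trans ?_ hB
    have hts : t - s = θ * t := by rw [hsdef]; ring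
    have hKψeq : Kψ = 2*D + (θ/2)⁻¹ * D := by
      rw [hKψdef, hts]
      have hθt : θ * t ≠ 0 := by positivity
      field_simp
    have hR0eq : R0 = frobNorm ξα + 3 * (2 * frobNorm (ξα' - ξα)
        + (θ/2)⁻¹ * frobNorm (ξα' - ξα)) := by
      rw [hR0def, hKψeq, hDdef, hΔdef]
    rw [hR0eq]
  have hts2 : 0 ≤ t^2 - s^2 := sub_nonneg.2 (pow_le_pow_left₀ hs0.le hst.le 2)
  -- combine everything
  calc cellInf f ξα t (AdmVSet t V) ≤ cellE f ξα t φφ :=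
        cellInf_le_cellE hα hΦnn hf2 ξα t V hmem
    _ = cellE f ξα' s φ'
        + ∫ x in openCyl t \ openCyl s, f x (withCol ξα (gradm φφ x)) := by
          rw [hsplit, hinner_eq]
    _ ≤ (cellInf f ξα' s (AdmVSet s V) + ε) + β * (1 + Φ R0) * (t^2 - s^2) := by
          apply add_le_add hy.le
          rw [← hvolDiff]
          exact hfr_le
    _ ≤ cellInf f ξα' s (AdmVSet s V) + ε + B * (t^2 - s^2) :=
          add_le_add le_rfl (mul_le_mul_of_nonneg_right hconst hts2)

end Master
end Stmt6Aux

namespace Stmt6Aux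

section Liminf

variable {f : V3 → M33 → ℝ} {Φ : ℝ → ℝ} {α β : ℝ}

lemma Tf0hom_le (hf : Caratheodory f) (hf2 : H2growth Φ α β f) (hα : 0 < α) (hβ : 0 ≤ β)
    (hΦnn : ∀ a, 0 ≤ a → 0 ≤ Φ a) (hΦmono : ∀ a b, 0 ≤ a → a ≤ b → Φ a ≤ Φ b)
    (V : Submodule ℝ V3) {ξα ξα' : M32} (hc : colsIn V ξα) (hc' : colsIn V ξα')
    {θ : ℝ} (hθ0 : 0 < θ) (hθ1 : θ ≤ 1/2)
    {B : ℝ}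
    (hB : β * (1 + Φ (frobNorm ξα + 3 * (2 * frobNorm (ξα' - ξα)
      + (θ/2)⁻¹ * frobNorm (ξα' - ξα)))) ≤ B) (hB0 : 0 ≤ B) :
    Tf0hom f V ξα ≤ Tf0hom f V ξα' + 2*θ*B := by
  set h : ℝ → ℝ := fun u => (u^2)⁻¹ * cellInf f ξα u (AdmVSet u V) with hh
  set h' : ℝ → ℝ := fun u => (u^2)⁻¹ * cellInf f ξα' u (AdmVSet u V) with hh'
  have hpos : ∀ u, 0 ≤ h u := fun u =>
    mul_nonneg (inv_nonneg.2 (sq_nonneg u)) (cellInf_nonneg hα hΦnn hf2 ξα u V)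
  have hpos' : ∀ u, 0 ≤ h' u := fun u =>
    mul_nonneg (inv_nonneg.2 (sq_nonneg u)) (cellInf_nonneg hα hΦnn hf2 ξα' u V)
  have hbddh : IsBoundedUnder (· ≥ ·) atTop h :=
    ⟨0, Filter.eventually_map.2 (Filter.Eventually.of_forall hpos)⟩
  have hub' : ∀ᶠ u in atTop, h' u ≤ β*(1+Φ (frobNorm ξα')) := by
    filter_upwards [eventually_gt_atTop (0:ℝ)] with u hu
    exact scaled_cellInf_le hf hf2 hα hβ hΦnn hΦmono ξα' V hu
  have hbdd' : IsBoundedUnder (· ≤ ·) atTop h' := ⟨_, Filter.eventually_map.2 hub'⟩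
  have hcob : IsCoboundedUnder (· ≥ ·) atTop h' := hbdd'.isCoboundedUnder_ge
  have hθ1' : (0:ℝ) < 1-θ := by linarith
  refine le_of_forall_pos_le_add ?_
  intro ε hε
  have hfreq : ∃ᶠ u in atTop, h' u < Tf0hom f V ξα' + ε/2 := by
    apply frequently_lt_of_liminf_lt hcob
    show liminf h' atTop < _
    have : Tf0hom f V ξα' = liminf h' atTop := rfl
    rw [← this]
    linarith
  have hfreq2 : ∃ᶠ u in atTop, h u ≤ (Tf0hom f V ξα' + 2*θ*B) + ε := by
    rw [Filter.frequently_atTop] at hfreq ⊢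
    intro a
    obtain ⟨v, hva, hv⟩ := hfreq ((1-θ)*(max a 1))
    refine ⟨v/(1-θ), ?_, ?_⟩
    · calc a ≤ max a 1 := le_max_left _ _
        _ ≤ v/(1-θ) := by
            rw [le_div_iff₀ hθ1']
            calc max a 1 * (1-θ) = (1-θ)*(max a 1) := mul_comm _ _
              _ ≤ v := hva
    · set u := v/(1-θ) with hu
      have hu1 : 1 ≤ u := by
        calc (1:ℝ) ≤ max a 1 := le_max_right _ _
          _ ≤ u := by
              rw [hu, le_div_iff₀ hθ1']
              calc max a 1 * (1-θ) = (1-θ)*(max a 1) := mul_comm _ _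
                _ ≤ v := hva
      have hu0 : (0:ℝ) < u := lt_of_lt_of_le one_pos hu1
      have hveq : (1-θ)*u = v := by
        rw [hu]
        field_simp
      have hmas := master hf hf2 hα hβ hΦnn hΦmono V hc hc' hθ0 hθ1 hB hu0 (half_pos hε)
      have hu2 : (0:ℝ) < u^2 := by positivity
      have hv2 : (0:ℝ) < ((1-θ)*u)^2 := by positivity
      have e1 : (u^2)⁻¹ * cellInf f ξα' ((1-θ)*u) (AdmVSet ((1-θ)*u) V) ≤ h' ((1-θ)*u) := by
        have e0 : cellInf f ξα' ((1-θ)*u) (AdmVSet ((1-θ)*u) V)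
            = ((1-θ)*u)^2 * h' ((1-θ)*u) := by
          rw [hh']
          field_simp
        rw [e0]
        calc (u^2)⁻¹ * (((1-θ)*u)^2 * h' ((1-θ)*u)) = ((1-θ)^2) * h' ((1-θ)*u) := by
              field_simp
          _ ≤ 1 * h' ((1-θ)*u) := by
              apply mul_le_mul_of_nonneg_right _ (hpos' _)
              nlinarith
          _ = h' ((1-θ)*u) := one_mul _
      have e2 : (u^2)⁻¹ * (ε/2) ≤ ε/2 := by
        apply mul_le_of_le_one_left (half_pos hε).le
        apply inv_le_one_of_one_le₀
        nlinarith
      have e3 : (u^2)⁻¹ * (B * (u^2 - ((1-θ)*u)^2)) ≤ 2*θ*B := by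
        have e0 : u^2 - ((1-θ)*u)^2 = (2*θ - θ^2)*u^2 := by ring
        rw [e0]
        calc (u^2)⁻¹ * (B * ((2*θ-θ^2)*u^2)) = B*(2*θ-θ^2) := by
              field_simp
          _ ≤ B*(2*θ) := by
              apply mul_le_mul_of_nonneg_left _ hB0
              nlinarith
          _ = 2*θ*B := by ring
      calc h u = (u^2)⁻¹ * cellInf f ξα u (AdmVSet u V) := rfl
        _ ≤ (u^2)⁻¹ * (cellInf f ξα' ((1-θ)*u) (AdmVSet ((1-θ)*u) V) + ε/2
              + B * (u^2 - ((1-θ)*u)^2)) := by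
            apply mul_le_mul_of_nonneg_left hmas (by positivity)
        _ = (u^2)⁻¹ * cellInf f ξα' ((1-θ)*u) (AdmVSet ((1-θ)*u) V)
              + (u^2)⁻¹ * (ε/2) + (u^2)⁻¹ * (B * (u^2 - ((1-θ)*u)^2)) := by ring
        _ ≤ h' ((1-θ)*u) + ε/2 + 2*θ*B := add_le_add (add_le_add e1 e2) e3
        _ ≤ (Tf0hom f V ξα' + ε/2) + ε/2 + 2*θ*B := by
            have hv' : h' ((1-θ)*u) < Tf0hom f V ξα' + ε/2 := by rw [hveq]; exact hv
            linarith
        _ = (Tf0hom f V ξα' + 2*θ*B) + ε := by ring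
  have hfin := liminf_le_of_frequently_le hfreq2 hbddh
  exact hfin

end Liminf
end Stmt6Aux

open Stmt6Aux

/-- Lipschitz-type estimate for `Tf⁰hom`, with modulus expressed through the
right-continuous density `φ` of `Φ`. -/
theorem stmt_6
    (Φ φ : ℝ → ℝ) (hΦ : IsYoung Φ) (hΔ : Delta2 Φ) (hΝ : Nabla2 Φ)
    (hrep : ∀ t : ℝ, 0 ≤ t → Φ t = ∫ s in (0:ℝ)..t, φ s)
    (hmono : MonotoneOn φ (Set.Ici 0))
    (hrc : ∀ s : ℝ, 0 ≤ s → ContinuousWithinAt φ (Set.Ici s) s)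
    (hφ0 : φ 0 = 0) (hφpos : ∀ s : ℝ, 0 < s → 0 < φ s)
    (hφtop : Tendsto φ atTop atTop)
    (f : V3 → M33 → ℝ) (hf : Caratheodory f) (hf1 : H1per f)
    (α β : ℝ) (hα : 0 < α) (hαβ : α ≤ β) (hf2 : H2growth Φ α β f) :
    ∃ C : ℝ, 0 < C ∧
      ∀ (V : Submodule ℝ V3) (ξα ξα' : M32), colsIn V ξα → colsIn V ξα' →
        |Tf0hom f V ξα - Tf0hom f V ξα'| ≤
          C * frobNorm (ξα - ξα') * (1 + φ (frobNorm ξα + frobNorm ξα')) := by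
  have hβ0 : (0:ℝ) < β := lt_of_lt_of_le hα hαβ
  have hΦnn : ∀ a, 0 ≤ a → 0 ≤ Φ a := fun a ha => Phi_nn hrep hmono hφ0 ha
  have hΦmono : ∀ a b : ℝ, 0 ≤ a → a ≤ b → Φ a ≤ Φ b :=
    fun a b ha hab => Phi_mono hrep hmono hφ0 ha hab
  obtain ⟨C₃, hC₃, hkey⟩ := ph_key hrep hmono hφ0 hΔ
  refine ⟨β*(1+19*C₃), by positivity, ?_⟩
  intro V ξα ξα' hcols hcols'
  set D := frobNorm (ξα - ξα') with hD
  set S := frobNorm ξα + frobNorm ξα' with hS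
  have hDnn : 0 ≤ D := frobNorm_nonneg _
  have hSnn : 0 ≤ S := add_nonneg (frobNorm_nonneg _) (frobNorm_nonneg _)
  have hDS : D ≤ S := frobNorm_sub_le ξα ξα'
  have hphS : 0 ≤ φ S := ph_nn hmono hφ0 S hSnn
  rcases eq_or_lt_of_le hDnn with hD0 | hD0
  · -- the two matrices coincide
    have heq : ξα = ξα' := eq_of_frobNorm_sub_eq_zero hD0.symm
    subst heq
    have h1 : Tf0hom f V ξα - Tf0hom f V ξα = 0 := sub_self _
    rw [h1, abs_zero, ← hD0, mul_zero, zero_mul]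
  · set θ := D/(2*(S+1)) with hθ
    have hS1 : (0:ℝ) < S + 1 := by linarith
    have hθ0 : 0 < θ := by rw [hθ]; positivity
    have hθhalf : θ ≤ 1/2 := by
      rw [hθ, div_le_iff₀ (by positivity)]
      nlinarith
    set B := β * (1 + Φ (19*(S+1))) with hB
    have hΦ19nn : 0 ≤ Φ (19*(S+1)) := hΦnn _ (by positivity)
    have hB0 : 0 ≤ B := by rw [hB]; nlinarith
    have hDne : D ≠ 0 := ne_of_gt hD0
    have hθD : (θ/2)⁻¹ * D = 4*(S+1) := by
      rw [hθ, div_div, inv_div, div_mul_cancel₀ _ hDne]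
      ring
    have hBineq : ∀ (ζ ζ' : M32), frobNorm ζ ≤ S → frobNorm (ζ' - ζ) = D →
        β * (1 + Φ (frobNorm ζ + 3 * (2 * frobNorm (ζ' - ζ)
          + (θ/2)⁻¹ * frobNorm (ζ' - ζ)))) ≤ B := by
      intro ζ ζ' hζ hδ
      rw [hδ, hB]
      apply mul_le_mul_of_nonneg_left _ hβ0.le
      apply add_le_add le_rfl
      apply hΦmono
      · have h1 : 0 ≤ (θ/2)⁻¹ * D := by positivity
        have h2 : 0 ≤ frobNorm ζ := frobNorm_nonneg _
        nlinarith
      · rw [hθD]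
        have h2 : 0 ≤ frobNorm ζ := frobNorm_nonneg _
        nlinarith
    have hstep : ∀ (ζ ζ' : M32), colsIn V ζ → colsIn V ζ' → frobNorm ζ ≤ S →
        frobNorm (ζ' - ζ) = D → Tf0hom f V ζ ≤ Tf0hom f V ζ' + 2*θ*B :=
      fun ζ ζ' h1 h2 h3 h4 =>
        Tf0hom_le hf hf2 hα hβ0.le hΦnn hΦmono V h1 h2 hθ0 hθhalf (hBineq ζ ζ' h3 h4) hB0
    have h1 := hstep ξα ξα' hcols hcols'
      (by linarith [frobNorm_nonneg ξα', hS.le, hS.ge])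
      (by rw [frobNorm_sub_rev])
    have h2 := hstep ξα' ξα hcols' hcols
      (by linarith [frobNorm_nonneg ξα, hS.le, hS.ge])
      hD.symm
    have hΦle : Φ (19*(S+1)) ≤ 19*(S+1) * φ (19*(S+1)) := Phi_le_mul hrep hmono (by positivity)
    have hkey' : φ (19*(S+1)) ≤ C₃*(1+φ S) := hkey S hSnn
    have hph19 : 0 ≤ φ (19*(S+1)) := ph_nn hmono hφ0 _ (by positivity)
    have h2θB : 2*θ*B ≤ (β*(1+19*C₃)) * D * (1 + φ S) := by
      rw [hθ, hB]
      have e : 2*(D/(2*(S+1)))*(β*(1+Φ (19*(S+1)))) = D*β*(1+Φ (19*(S+1)))/(S+1) := by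
        field_simp
      rw [e, div_le_iff₀ hS1]
      have c1 : Φ (19*(S+1)) ≤ 19*(S+1)*(C₃*(1+φ S)) := by
        calc Φ (19*(S+1)) ≤ 19*(S+1) * φ (19*(S+1)) := hΦle
          _ ≤ 19*(S+1)*(C₃*(1+φ S)) := by
              apply mul_le_mul_of_nonneg_left hkey' (by positivity)
      have c2 : D*β*(1+Φ (19*(S+1))) ≤ D*β*(1 + 19*(S+1)*(C₃*(1+φ S))) := by
        apply mul_le_mul_of_nonneg_left _ (mul_nonneg hDnn hβ0.le)
        linarith
      refine c2.trans ?_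
      nlinarith [mul_nonneg (mul_nonneg (mul_nonneg hβ0.le hDnn) hphS) hSnn,
        mul_nonneg (mul_nonneg hβ0.le hDnn) hphS,
        mul_nonneg (mul_nonneg hβ0.le hDnn) hSnn]
    have habs : |Tf0hom f V ξα - Tf0hom f V ξα'| ≤ 2*θ*B :=
      abs_le.2 ⟨by linarith, by linarith⟩
    calc |Tf0hom f V ξα - Tf0hom f V ξα'| ≤ 2*θ*B := habs
      _ ≤ β*(1+19*C₃) * D * (1 + φ S) := h2θB
end
end

section
/- Let Φ be a Young function of class Δ₂ admitting the representation Φ(t) = ∫₀ᵗ φ(s) ds with φ: [0,∞) → [0,∞) nondecreasing, right-continuous, φ(0)=0, φ(s)>0 for s>0, and φ(s) → +∞ as s → +∞. Let g: ℝ^{d×N} → [0,∞) be separately convex (i.e. convex in each of the dN matrix entries when the others are held fixed) and satisfy g(ξ) ≤ β(1+Φ(|ξ|)) for all ξ and some β>0. Then there exists a constant C>0, depending only on d, N, β and Φ, such that |g(ξ) − g(η)| ≤ C·|ξ − η|·(1 + φ(|ξ| + |η|)) for all ξ, η ∈ ℝ^{d×N}. -/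
set_option maxHeartbeats 1600000


open MeasureTheory Filter

noncomputable section

private lemma aux_slope {h : ℝ → ℝ} (hc : ConvexOn ℝ Set.univ h) (hnn : ∀ v, 0 ≤ h v)
    {a b r B : ℝ} (hab : a ≤ b) (hr : 0 < r)
    (h1 : h (b + r) ≤ B) (h2 : h (a - r) ≤ B) :
    |h b - h a| ≤ (b - a) * (B / r) := by
  have hB : 0 ≤ B := le_trans (hnn _) h1
  rcases eq_or_lt_of_le hab with rfl | hlt
  · simp [div_nonneg hB hr.le]
  · have hba : (0:ℝ) < b - a := by linarith
    rw [abs_le]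
    constructor
    · have hs := hc.slope_mono_adjacent (Set.mem_univ (a - r)) (Set.mem_univ b)
        (show a - r < a by linarith) hlt
      have e1 : a - (a - r) = r := by ring
      rw [e1] at hs
      have l1 : -B / r ≤ (h a - h (a - r)) / r :=
        (div_le_div_iff_of_pos_right hr).mpr (by linarith [hnn a])
      have l2 := (le_div_iff₀ hba).mp (l1.trans hs)
      have e2 : (-B / r) * (b - a) = -((b - a) * (B / r)) := by ring
      linarith
    · have hs2 := hc.slope_mono_adjacent (Set.mem_univ a) (Set.mem_univ (b + r))
        hlt (show b < b + r by linarith)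
      have e1 : b + r - b = r := by ring
      rw [e1] at hs2
      have u1 : (h (b + r) - h b) / r ≤ B / r :=
        (div_le_div_iff_of_pos_right hr).mpr (by linarith [hnn b])
      have u2 := (div_le_iff₀ hba).mp (hs2.trans u1)
      have e2 : (B / r) * (b - a) = (b - a) * (B / r) := by ring
      linarith

private def updM {d N : ℕ} (ζ : Matrix (Fin d) (Fin N) ℝ) (i : Fin d) (j : Fin N)
    (v : ℝ) : Matrix (Fin d) (Fin N) ℝ :=
  Matrix.of fun i' j' => if i' = i ∧ j' = j then v else ζ i' j'

private def mixM {d N : ℕ} (ξ η : Matrix (Fin d) (Fin N) ℝ)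
    (S : Finset (Fin d × Fin N)) : Matrix (Fin d) (Fin N) ℝ :=
  Matrix.of fun i j => if (i, j) ∈ S then ξ i j else η i j

private lemma mixM_empty {d N : ℕ} (ξ η : Matrix (Fin d) (Fin N) ℝ) :
    mixM ξ η (∅ : Finset (Fin d × Fin N)) = η := by
  ext i j; simp [mixM]

private lemma mixM_univ {d N : ℕ} (ξ η : Matrix (Fin d) (Fin N) ℝ) :
    mixM ξ η (Finset.univ : Finset (Fin d × Fin N)) = ξ := by
  ext i j; simp [mixM]

private lemma mixM_insert {d N : ℕ} (ξ η : Matrix (Fin d) (Fin N) ℝ)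
    (S : Finset (Fin d × Fin N)) (pi : Fin d) (pj : Fin N) :
    mixM ξ η (insert (pi, pj) S) = updM (mixM ξ η S) pi pj (ξ pi pj) := by
  ext i j
  by_cases h : i = pi ∧ j = pj
  · obtain ⟨rfl, rfl⟩ := h
    simp [mixM, updM]
  · have h' : ¬ ((i, j) = (pi, pj)) := by
      simp only [Prod.mk.injEq]; exact h
    simp [mixM, updM, Finset.mem_insert, h, h']

private lemma mixM_self {d N : ℕ} (ξ η : Matrix (Fin d) (Fin N) ℝ)
    (S : Finset (Fin d × Fin N)) (pi : Fin d) (pj : Fin N) (hp : (pi, pj) ∉ S) :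
    mixM ξ η S = updM (mixM ξ η S) pi pj (η pi pj) := by
  ext i j
  by_cases h : i = pi ∧ j = pj
  · obtain ⟨rfl, rfl⟩ := h
    simp [mixM, updM, hp]
  · simp [updM, h]

/-- locally Lipschitz estimate for separately convex functions with Orlicz
growth; the constant depends only on `d`, `N`, `β` and `Φ`. -/
theorem stmt_7
    (d N : ℕ) (Φ φ : ℝ → ℝ) (hΦ : IsYoung Φ) (hΔ : Delta2 Φ)
    (hrep : ∀ t : ℝ, 0 ≤ t → Φ t = ∫ s in (0:ℝ)..t, φ s)
    (hmono : MonotoneOn φ (Set.Ici 0))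
    (hrc : ∀ s : ℝ, 0 ≤ s → ContinuousWithinAt φ (Set.Ici s) s)
    (hφ0 : φ 0 = 0) (hφpos : ∀ s : ℝ, 0 < s → 0 < φ s)
    (hφtop : Tendsto φ atTop atTop)
    (β : ℝ) (hβ : 0 < β) :
    ∃ C : ℝ, 0 < C ∧
      ∀ g : Matrix (Fin d) (Fin N) ℝ → ℝ,
        (∀ ξ, 0 ≤ g ξ) →
        (∀ (i : Fin d) (j : Fin N) (ξ : Matrix (Fin d) (Fin N) ℝ),
          ConvexOn ℝ Set.univ (fun s : ℝ =>
            g (Matrix.of fun i' j' => if i' = i ∧ j' = j then s else ξ i' j'))) →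
        (∀ ξ, g ξ ≤ β * (1 + Φ (frobNorm ξ))) →
        ∀ ξ η : Matrix (Fin d) (Fin N) ℝ,
          |g ξ - g η| ≤ C * frobNorm (ξ - η) * (1 + φ (frobNorm ξ + frobNorm η)) := by
  
  classical
  obtain ⟨α, hα, t₀, ht₀, hΔ2⟩ := hΔ
  set α' : ℝ := max α 1 with hα'def
  have hα1 : (1:ℝ) ≤ α' := le_max_right _ _
  set T : ℝ := max t₀ 1 with hTdef
  have hT1 : (1:ℝ) ≤ T := le_max_right _ _
  have hTt₀ : t₀ ≤ T := le_max_left _ _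
  -- nonnegativity of φ
  have hφnn : ∀ s : ℝ, 0 ≤ s → 0 ≤ φ s := by
    intro s hs
    have := hmono (Set.self_mem_Ici) (show s ∈ Set.Ici (0:ℝ) from hs) hs
    rwa [hφ0] at this
  -- interval integrability of φ on nonneg intervals
  have hint : ∀ a b : ℝ, 0 ≤ a → 0 ≤ b → IntervalIntegrable φ volume a b := by
    intro a b ha hb
    refine (hmono.mono ?_).intervalIntegrable
    intro x hx
    exact le_trans (le_min ha hb) hx.1
  -- Φ is nonneg on [0,∞)
  have hΦnn : ∀ t : ℝ, 0 ≤ t → 0 ≤ Φ t := by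
    intro t ht
    rw [hrep t ht]
    exact intervalIntegral.integral_nonneg ht (fun u hu => hφnn u hu.1)
  -- Φ is monotone on [0,∞)
  have hΦm : ∀ s t : ℝ, 0 ≤ s → s ≤ t → Φ s ≤ Φ t := by
    intro s t hs hst
    have ht : 0 ≤ t := hs.trans hst
    rw [hrep s hs, hrep t ht]
    rw [← intervalIntegral.integral_add_adjacent_intervals (hint 0 s le_rfl hs)
      (hint s t hs ht)]
    have : 0 ≤ ∫ x in s..t, φ x :=
      intervalIntegral.integral_nonneg hst (fun u hu => hφnn u (hs.trans hu.1))
    linarith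
  -- Φ(t) ≤ t φ(t)
  have hΦle : ∀ t : ℝ, 0 ≤ t → Φ t ≤ t * φ t := by
    intro t ht
    rw [hrep t ht]
    calc ∫ s in (0:ℝ)..t, φ s ≤ ∫ _s in (0:ℝ)..t, φ t := by
          refine intervalIntegral.integral_mono_on ht (hint 0 t le_rfl ht)
            intervalIntegrable_const ?_
          intro x hx
          exact hmono (show x ∈ Set.Ici (0:ℝ) from hx.1)
            (show t ∈ Set.Ici (0:ℝ) from ht) hx.2
      _ = t * φ t := by simp
  -- the Δ₂ estimate with α'
  have hΔ' : ∀ t : ℝ, T ≤ t → Φ (2 * t) ≤ α' * Φ t := by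
    intro t ht
    exact (hΔ2 t (hTt₀.trans ht)).trans
      (mul_le_mul_of_nonneg_right (le_max_left α 1) (hΦnn t (by linarith)))
  set κ : ℝ := φ T with hκdef
  have hκ : 0 ≤ κ := hφnn T (by linarith)
  set C₁ : ℝ := β * (1 + α' ^ 2 * (κ + 1)) with hC₁def
  have hC₁ : 0 < C₁ := by positivity
  refine ⟨(d * N : ℝ) * C₁ + 1, by positivity, ?_⟩
  intro g hg0 hgconv hggrow ξ η
  have hfr : ∀ {m n : ℕ} (A : Matrix (Fin m) (Fin n) ℝ), 0 ≤ frobNorm A :=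
    fun A => Real.sqrt_nonneg _
  set R : ℝ := frobNorm ξ + frobNorm η with hRdef
  have hRnn : 0 ≤ R := add_nonneg (hfr ξ) (hfr η)
  set r : ℝ := max R T with hrdef
  have hrT : T ≤ r := le_max_right _ _
  have hrR : R ≤ r := le_max_left _ _
  have hr1 : (1:ℝ) ≤ r := hT1.trans hrT
  have hr0 : (0:ℝ) < r := lt_of_lt_of_le one_pos hr1
  have hφR : 0 ≤ φ R := hφnn R hRnn
  set K : ℝ := C₁ * (1 + φ R) with hKdef
  have hK : 0 ≤ K := by positivity
  -- entries are bounded by the Frobenius norm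
  have hentry : ∀ (ζ : Matrix (Fin d) (Fin N) ℝ) (i : Fin d) (j : Fin N),
      |ζ i j| ≤ frobNorm ζ := by
    intro ζ i j
    rw [← Real.sqrt_sq_eq_abs]
    apply Real.sqrt_le_sqrt
    have h1 : (ζ i j) ^ 2 ≤ ∑ j', (ζ i j') ^ 2 :=
      Finset.single_le_sum (f := fun j' => (ζ i j') ^ 2)
        (fun _ _ => sq_nonneg _) (Finset.mem_univ j)
    have h2 : (∑ j', (ζ i j') ^ 2) ≤ ∑ i', ∑ j', (ζ i' j') ^ 2 :=
      Finset.single_le_sum (f := fun i' => ∑ j', (ζ i' j') ^ 2)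
        (fun _ _ => Finset.sum_nonneg fun _ _ => sq_nonneg _) (Finset.mem_univ i)
    exact h1.trans h2
  have hsumsq : ∀ (ζ : Matrix (Fin d) (Fin N) ℝ),
      (∑ i, ∑ j, (ζ i j) ^ 2) = frobNorm ζ ^ 2 := by
    intro ζ
    rw [frobNorm]; exact (Real.sq_sqrt (Finset.sum_nonneg fun _ _ =>
      Finset.sum_nonneg fun _ _ => sq_nonneg _)).symm
  -- the key one-entry estimate
  have key : ∀ (ζ : Matrix (Fin d) (Fin N) ℝ) (i : Fin d) (j : Fin N) (s t : ℝ),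
      frobNorm ζ ≤ R → |s| ≤ R → |t| ≤ R →
      |g (updM ζ i j s) - g (updM ζ i j t)| ≤ |s - t| * K := by
    have main : ∀ (ζ : Matrix (Fin d) (Fin N) ℝ) (i : Fin d) (j : Fin N) (s t : ℝ),
        frobNorm ζ ≤ R → |s| ≤ R → |t| ≤ R → t ≤ s →
        |g (updM ζ i j s) - g (updM ζ i j t)| ≤ (s - t) * K := by
      intro ζ i j s t hζ hsR htR hts
      set h : ℝ → ℝ := fun v => g (updM ζ i j v) with hhdef
      have hconv : ConvexOn ℝ Set.univ h := hgconv i j ζ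
      have hnn : ∀ v, 0 ≤ h v := fun v => hg0 _
      -- bound the Frobenius norm of updM ζ i j v
      have hupdnorm : ∀ v : ℝ, |v| ≤ 2 * r → frobNorm (updM ζ i j v) ≤ 3 * r := by
        intro v hv
        have hsum : (∑ i', ∑ j', (updM ζ i j v i' j') ^ 2)
            ≤ (∑ i', ∑ j', (ζ i' j') ^ 2) + v ^ 2 := by
          have step : ∀ i' j', (updM ζ i j v i' j') ^ 2
              ≤ (ζ i' j') ^ 2 + (if i' = i ∧ j' = j then v ^ 2 else 0) := by
            intro i' j'
            by_cases hc : i' = i ∧ j' = j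
            · simp only [updM, Matrix.of_apply, if_pos hc]
              nlinarith [sq_nonneg (ζ i' j')]
            · simp [updM, hc]
          calc (∑ i', ∑ j', (updM ζ i j v i' j') ^ 2)
              ≤ ∑ i', ∑ j', ((ζ i' j') ^ 2 + (if i' = i ∧ j' = j then v ^ 2 else 0)) :=
                Finset.sum_le_sum fun i' _ => Finset.sum_le_sum fun j' _ => step i' j'
            _ = (∑ i', ∑ j', (ζ i' j') ^ 2)
                + ∑ i', ∑ j', (if i' = i ∧ j' = j then v ^ 2 else 0) := by
                rw [← Finset.sum_add_distrib]
                congr 1; ext i'; rw [← Finset.sum_add_distrib]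
            _ ≤ (∑ i', ∑ j', (ζ i' j') ^ 2) + v ^ 2 := by
                have : (∑ i', ∑ j', (if i' = i ∧ j' = j then v ^ 2 else 0)) = v ^ 2 := by
                  have e : ∀ i' j', (if i' = i ∧ j' = j then v ^ 2 else 0)
                      = (if i' = i then (if j' = j then v ^ 2 else 0) else 0) := by
                    intro i' j'
                    by_cases h1 : i' = i <;> by_cases h2 : j' = j <;> simp [h1, h2]
                  simp only [e]
                  simp
                rw [this]
        have hζsq : (∑ i', ∑ j', (ζ i' j') ^ 2) ≤ R ^ 2 := by
          rw [hsumsq ζ]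
          exact pow_le_pow_left₀ (hfr ζ) hζ 2
        have h9 : (∑ i', ∑ j', (updM ζ i j v i' j') ^ 2) ≤ (3 * r) ^ 2 := by
          have hv2 : v ^ 2 ≤ (2 * r) ^ 2 := by
            have := abs_le.mp hv
            nlinarith [this.1, this.2]
          nlinarith [hrR, hRnn]
        rw [frobNorm]
        calc Real.sqrt (∑ i', ∑ j', (updM ζ i j v i' j') ^ 2)
            ≤ Real.sqrt ((3 * r) ^ 2) := Real.sqrt_le_sqrt h9
          _ = 3 * r := Real.sqrt_sq (by linarith)
      set B : ℝ := β * (1 + Φ (3 * r)) with hBdef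
      have hBbound : ∀ v : ℝ, |v| ≤ 2 * r → h v ≤ B := by
        intro v hv
        calc h v ≤ β * (1 + Φ (frobNorm (updM ζ i j v))) := hggrow _
          _ ≤ B := by
              apply mul_le_mul_of_nonneg_left _ hβ.le
              have := hΦm (frobNorm (updM ζ i j v)) (3 * r) (hfr _) (hupdnorm v hv)
              linarith
      have hsr : |s + r| ≤ 2 * r := by
        rw [abs_le]; rw [abs_le] at hsR
        constructor <;> linarith [hsR.1, hsR.2]
      have htr : |t - r| ≤ 2 * r := by
        rw [abs_le]; rw [abs_le] at htR
        constructor <;> linarith [htR.1, htR.2]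
      have hslope := aux_slope hconv hnn hts hr0 (hBbound _ hsr) (hBbound _ htr)
      -- now bound B / r ≤ K
      have hφr : φ r ≤ κ + φ R := by
        rcases le_total R T with hc | hc
        · have : r = T := max_eq_right hc
          rw [this]; linarith
        · have : r = R := max_eq_left hc
          rw [this]; linarith
      have hΦ3r : Φ (3 * r) ≤ α' ^ 2 * (r * φ r) := by
        have c1 : Φ (3 * r) ≤ Φ (4 * r) := hΦm _ _ (by linarith) (by linarith)
        have c2 : Φ (4 * r) ≤ α' * Φ (2 * r) := by
          have := hΔ' (2 * r) (by linarith)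
          calc Φ (4 * r) = Φ (2 * (2 * r)) := by ring_nf
            _ ≤ α' * Φ (2 * r) := this
        have c3 : Φ (2 * r) ≤ α' * Φ r := hΔ' r hrT
        have c4 : Φ r ≤ r * φ r := hΦle r hr0.le
        have hα0 : (0:ℝ) ≤ α' := by linarith
        calc Φ (3 * r) ≤ Φ (4 * r) := c1
          _ ≤ α' * Φ (2 * r) := c2
          _ ≤ α' * (α' * Φ r) := mul_le_mul_of_nonneg_left c3 hα0
          _ ≤ α' * (α' * (r * φ r)) :=
              mul_le_mul_of_nonneg_left (mul_le_mul_of_nonneg_left c4 hα0) hα0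
          _ = α' ^ 2 * (r * φ r) := by ring
      have hBK : B / r ≤ K := by
        rw [div_le_iff₀ hr0]
        have hφrnn : 0 ≤ φ r := hφnn r hr0.le
        have expand : K * r = β * (r * (1 + φ R)) + β * (α' ^ 2 * κ * (r * (1 + φ R)))
            + β * (α' ^ 2 * (r * (1 + φ R))) := by
          rw [hKdef, hC₁def]; ring
        have e1 : (1:ℝ) ≤ r * (1 + φ R) := by nlinarith
        rw [hBdef, expand]
        have hB1 : Φ (3 * r) ≤ α' ^ 2 * (r * (κ + φ R)) := by
          refine hΦ3r.trans (mul_le_mul_of_nonneg_left ?_ (sq_nonneg α'))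
          exact mul_le_mul_of_nonneg_left hφr hr0.le
        have hB2 : α' ^ 2 * (r * (κ + φ R)) = α' ^ 2 * κ * r + α' ^ 2 * (r * φ R) := by
          ring
        have i1 : α' ^ 2 * κ * r ≤ α' ^ 2 * κ * (r * (1 + φ R)) := by
          nlinarith [mul_nonneg (mul_nonneg (mul_nonneg (sq_nonneg α') hκ) hr0.le) hφR]
        have i2 : α' ^ 2 * (r * φ R) ≤ α' ^ 2 * (r * (1 + φ R)) := by
          nlinarith [mul_nonneg (sq_nonneg α') hr0.le]
        calc β * (1 + Φ (3 * r))
            ≤ β * ((r * (1 + φ R)) + α' ^ 2 * κ * (r * (1 + φ R))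
              + α' ^ 2 * (r * (1 + φ R))) := by
              apply mul_le_mul_of_nonneg_left _ hβ.le
              rw [hB2] at hB1
              linarith
          _ = β * (r * (1 + φ R)) + β * (α' ^ 2 * κ * (r * (1 + φ R)))
              + β * (α' ^ 2 * (r * (1 + φ R))) := by ring
      calc |g (updM ζ i j s) - g (updM ζ i j t)| = |h s - h t| := rfl
        _ ≤ (s - t) * (B / r) := hslope
        _ ≤ (s - t) * K := mul_le_mul_of_nonneg_left hBK (by linarith)
    intro ζ i j s t hζ hsR htR
    rcases le_total t s with hts | hst
    · have := main ζ i j s t hζ hsR htR hts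
      rwa [abs_of_nonneg (by linarith : (0:ℝ) ≤ s - t)]
    · have := main ζ i j t s hζ htR hsR hst
      rw [abs_sub_comm, abs_sub_comm s t]
      rwa [abs_of_nonneg (by linarith : (0:ℝ) ≤ t - s)]
  -- bound on mixed matrices
  have hmixnorm : ∀ S : Finset (Fin d × Fin N), frobNorm (mixM ξ η S) ≤ R := by
    intro S
    have hsum : (∑ i, ∑ j, (mixM ξ η S i j) ^ 2)
        ≤ (∑ i, ∑ j, (ξ i j) ^ 2) + ∑ i, ∑ j, (η i j) ^ 2 := by
      have step : ∀ i j, (mixM ξ η S i j) ^ 2 ≤ (ξ i j) ^ 2 + (η i j) ^ 2 := by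
        intro i j
        by_cases hc : (i, j) ∈ S <;>
          simp [mixM, hc] <;> nlinarith [sq_nonneg (ξ i j), sq_nonneg (η i j)]
      calc (∑ i, ∑ j, (mixM ξ η S i j) ^ 2)
          ≤ ∑ i, ∑ j, ((ξ i j) ^ 2 + (η i j) ^ 2) :=
            Finset.sum_le_sum fun i _ => Finset.sum_le_sum fun j _ => step i j
        _ = (∑ i, ∑ j, (ξ i j) ^ 2) + ∑ i, ∑ j, (η i j) ^ 2 := by
            rw [← Finset.sum_add_distrib]
            congr 1; ext i; rw [← Finset.sum_add_distrib]
    rw [frobNorm]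
    have hR2 : (∑ i, ∑ j, (mixM ξ η S i j) ^ 2) ≤ R ^ 2 := by
      rw [hsumsq ξ, hsumsq η] at hsum
      nlinarith [hfr ξ, hfr η]
    calc Real.sqrt (∑ i, ∑ j, (mixM ξ η S i j) ^ 2) ≤ Real.sqrt (R ^ 2) :=
        Real.sqrt_le_sqrt hR2
      _ = R := Real.sqrt_sq hRnn
  have hξR : frobNorm ξ ≤ R := by have := hfr η; rw [hRdef]; linarith
  have hηR : frobNorm η ≤ R := by have := hfr ξ; rw [hRdef]; linarith
  -- telescoping
  have tele : ∀ S : Finset (Fin d × Fin N),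
      |g (mixM ξ η S) - g η| ≤ (∑ p ∈ S, |ξ p.1 p.2 - η p.1 p.2|) * K := by
    intro S
    induction S using Finset.induction_on with
    | empty => simp [mixM_empty]
    | @insert p S hp ih =>
      obtain ⟨pi, pj⟩ := p
      have e1 : mixM ξ η (insert (pi, pj) S) = updM (mixM ξ η S) pi pj (ξ pi pj) :=
        mixM_insert ξ η S pi pj
      have e2 : mixM ξ η S = updM (mixM ξ η S) pi pj (η pi pj) :=
        mixM_self ξ η S pi pj hp
      have hstep : |g (mixM ξ η (insert (pi, pj) S)) - g (mixM ξ η S)|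
          ≤ |ξ pi pj - η pi pj| * K := by
        rw [e1]
        nth_rewrite 2 [e2]
        exact key (mixM ξ η S) pi pj (ξ pi pj) (η pi pj) (hmixnorm S)
          ((hentry ξ pi pj).trans hξR) ((hentry η pi pj).trans hηR)
      have htri : |g (mixM ξ η (insert (pi, pj) S)) - g η|
          ≤ |g (mixM ξ η (insert (pi, pj) S)) - g (mixM ξ η S)|
            + |g (mixM ξ η S) - g η| := abs_sub_le _ _ _
      rw [Finset.sum_insert hp, add_mul]
      calc |g (mixM ξ η (insert (pi, pj) S)) - g η|
          ≤ |ξ pi pj - η pi pj| * K + (∑ p ∈ S, |ξ p.1 p.2 - η p.1 p.2|) * K := by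
            have := htri.trans (add_le_add hstep ih)
            simpa using this
        _ = _ := rfl
  have final := tele Finset.univ
  rw [mixM_univ] at final
  -- sum of entrywise differences ≤ d*N * frobNorm (ξ - η)
  have hsumbd : (∑ p : Fin d × Fin N, |ξ p.1 p.2 - η p.1 p.2|)
      ≤ (d * N : ℝ) * frobNorm (ξ - η) := by
    have step : ∀ p : Fin d × Fin N, |ξ p.1 p.2 - η p.1 p.2| ≤ frobNorm (ξ - η) := by
      intro p
      have := hentry (ξ - η) p.1 p.2
      simpa [Matrix.sub_apply] using this
    calc (∑ p : Fin d × Fin N, |ξ p.1 p.2 - η p.1 p.2|)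
        ≤ ∑ _p : Fin d × Fin N, frobNorm (ξ - η) :=
          Finset.sum_le_sum fun p _ => step p
      _ = (d * N : ℝ) * frobNorm (ξ - η) := by
          simp [Finset.sum_const, Finset.card_univ, mul_assoc]
  have hfrξη : 0 ≤ frobNorm (ξ - η) := hfr _
  calc |g ξ - g η| ≤ (∑ p : Fin d × Fin N, |ξ p.1 p.2 - η p.1 p.2|) * K := final
    _ ≤ ((d * N : ℝ) * frobNorm (ξ - η)) * K := mul_le_mul_of_nonneg_right hsumbd hK
    _ ≤ ((d * N : ℝ) * C₁ + 1) * frobNorm (ξ - η) * (1 + φ R) := by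
        rw [hKdef]
        nlinarith [hfrξη, hφR, hC₁.le, mul_nonneg hfrξη hφR,
          mul_nonneg (mul_nonneg hfrξη hφR) hC₁.le]
    _ = ((d * N : ℝ) * C₁ + 1) * frobNorm (ξ - η) * (1 + φ (frobNorm ξ + frobNorm η)) := by
        rw [hRdef]
end
end

section
/- Let M>0, let K ⊂ ℝ³ be a compact set, and let f: K × B̄(0,M) → ℝ be continuous, where B̄(0,M) is the closed ball of radius M in ℝ^{3×3} for the Frobenius norm. Define the modulus Ψ(r) := sup{ |f(x,ξ) − f(x,ζ)| : x ∈ K, ξ, ζ ∈ B̄(0,M), |ξ−ζ| ≤ r }. Let Φ be a Young function and L a Lipschitz constant of Φ on [0, 2M]. For i = 1, 2 let V_i ⊆ ℝ³ be a linear subspace, P_i the orthogonal projection onto V_i, 𝐏_i the column-wise action on 3×3 matrices, and f̄_i(x,ξ) := f(x, 𝐏_iξ) + Φ(|ξ − 𝐏_iξ|). Then for every x ∈ K and every ξ ∈ ℝ^{3×3} with |ξ| ≤ M: |f̄₁(x,ξ) − f̄₂(x,ξ)| ≤ Ψ(M·‖P₁ − P₂‖) + L·M·‖P₁ − P₂‖,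 where ‖P₁ − P₂‖ is the operator norm of P₁ − P₂ on ℝ³. -/
open MeasureTheory Filter

noncomputable section

/-- Euclidean norm on `ℝ³`. -/
def euclNorm (x : V3) : ℝ := Real.sqrt (∑ i, (x i) ^ 2)

/-- Operator norm (w.r.t. the Euclidean norm) of a map on `ℝ³`. -/
def opNormE (T : V3 → V3) : ℝ :=
  sSup {r : ℝ | ∃ x : V3, euclNorm x ≤ 1 ∧ r = euclNorm (T x)}


-- ==================== auxiliary lemmas ====================

def embV (x : V3) : EuclideanSpace ℝ (Fin 3) := (WithLp.equiv 2 (Fin 3 → ℝ)).symm x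
def embM (A : M33) : EuclideanSpace ℝ (Fin 3 × Fin 3) :=
  (WithLp.equiv 2 ((Fin 3 × Fin 3) → ℝ)).symm (fun p => A p.1 p.2)

lemma euclNorm_eq' (x : V3) : euclNorm x = ‖embV x‖ := by
  rw [euclNorm, EuclideanSpace.norm_eq]
  congr 1
  exact Finset.sum_congr rfl fun i _ => by simp [embV, Real.norm_eq_abs, sq_abs]

lemma frobNorm_eq' (A : M33) : frobNorm A = ‖embM A‖ := by
  rw [frobNorm, EuclideanSpace.norm_eq, Fintype.sum_prod_type]
  congr 1
  exact Finset.sum_congr rfl fun i _ => Finset.sum_congr rfl fun j _ => by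
    simp [embM, Real.norm_eq_abs, sq_abs]

lemma frobNorm_nonneg' (A : M33) : 0 ≤ frobNorm A := Real.sqrt_nonneg _

lemma euclNorm_nonneg' (x : V3) : 0 ≤ euclNorm x := Real.sqrt_nonneg _

lemma euclNorm_sq (x : V3) : (euclNorm x) ^ 2 = ∑ i, (x i) ^ 2 :=
  Real.sq_sqrt (Finset.sum_nonneg fun i _ => sq_nonneg _)

lemma frobNorm_sq (A : M33) : (frobNorm A) ^ 2 = ∑ i, ∑ j, (A i j) ^ 2 :=
  Real.sq_sqrt (Finset.sum_nonneg fun i _ => Finset.sum_nonneg fun j _ => sq_nonneg _)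

lemma proj_sq {V : Submodule ℝ V3} {P : V3 → V3} (hP : IsOrthProjOnto V P) (x : V3) :
    ∑ i, (P x i) ^ 2 ≤ ∑ i, (x i) ^ 2 := by
  have horth := hP.2.2.2 x (P x) (hP.2.1 x)
  simp only [Fin.sum_univ_three] at horth ⊢
  nlinarith [sq_nonneg (x 0 - P x 0), sq_nonneg (x 1 - P x 1), sq_nonneg (x 2 - P x 2)]

lemma proj_contract {V : Submodule ℝ V3} {P : V3 → V3} (hP : IsOrthProjOnto V P) (x : V3) :
    euclNorm (P x) ≤ euclNorm x :=
  Real.sqrt_le_sqrt (proj_sq hP x)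

lemma opNormE_spec (T : V3 → V3) (hT : IsLinearMap ℝ T) (C : ℝ)
    (hb : ∀ x, euclNorm x ≤ 1 → euclNorm (T x) ≤ C) :
    0 ≤ opNormE T ∧ ∀ v : V3, euclNorm (T v) ≤ opNormE T * euclNorm v := by
  have hbdd : BddAbove {r : ℝ | ∃ x : V3, euclNorm x ≤ 1 ∧ r = euclNorm (T x)} := by
    refine ⟨C, ?_⟩
    rintro r ⟨x, hx, rfl⟩
    exact hb x hx
  have h0 : euclNorm (0 : V3) = 0 := by
    rw [euclNorm_eq']
    exact norm_eq_zero.mpr rfl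
  have hT0 : T 0 = 0 := hT.map_zero
  have hnn : 0 ≤ opNormE T := by
    have := le_csSup hbdd (by exact ⟨0, by rw [h0]; norm_num, by rw [hT0, h0]⟩ :
      (0 : ℝ) ∈ {r : ℝ | ∃ x : V3, euclNorm x ≤ 1 ∧ r = euclNorm (T x)})
    exact this
  refine ⟨hnn, fun v => ?_⟩
  by_cases hv : euclNorm v = 0
  · have hv0 : v = 0 := by
      rw [euclNorm_eq', norm_eq_zero] at hv
      simpa [embV] using hv
    rw [hv0, hT0, h0, mul_zero]
  · have hc : 0 < euclNorm v := lt_of_le_of_ne (euclNorm_nonneg' v) (Ne.symm hv)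
    set c := euclNorm v with hcdef
    have hx1 : euclNorm (c⁻¹ • v) = 1 := by
      rw [euclNorm_eq']
      have : embV (c⁻¹ • v) = c⁻¹ • embV v := rfl
      rw [this, norm_smul, Real.norm_eq_abs, abs_of_pos (inv_pos.mpr hc), ← euclNorm_eq',
        ← hcdef, inv_mul_cancel₀ hv]
    have hmem : euclNorm (T (c⁻¹ • v)) ∈
        {r : ℝ | ∃ x : V3, euclNorm x ≤ 1 ∧ r = euclNorm (T x)} :=
      ⟨c⁻¹ • v, le_of_eq hx1, rfl⟩
    have hle : euclNorm (T (c⁻¹ • v)) ≤ opNormE T := le_csSup hbdd hmem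
    have heq : euclNorm (T (c⁻¹ • v)) = c⁻¹ * euclNorm (T v) := by
      rw [hT.map_smul, euclNorm_eq']
      have : embV (c⁻¹ • T v) = c⁻¹ • embV (T v) := rfl
      rw [this, norm_smul, Real.norm_eq_abs, abs_of_pos (inv_pos.mpr hc), ← euclNorm_eq']
    rw [heq] at hle
    calc euclNorm (T v) = c * (c⁻¹ * euclNorm (T v)) := by field_simp
      _ ≤ c * opNormE T := by
          exact mul_le_mul_of_nonneg_left hle (le_of_lt hc)
      _ = opNormE T * c := mul_comm _ _

lemma frob_col_le (T : V3 → V3) (CT : ℝ) (hTn : 0 ≤ CT)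
    (hTb : ∀ v : V3, euclNorm (T v) ≤ CT * euclNorm v)
    (ξ D : M33) (hD : ∀ i j, D i j = T (fun k => ξ k j) i) :
    frobNorm D ≤ CT * frobNorm ξ := by
  have key : ∑ i, ∑ j, (D i j) ^ 2 ≤ CT ^ 2 * ∑ i, ∑ j, (ξ i j) ^ 2 := by
    calc ∑ i, ∑ j, (D i j) ^ 2
        = ∑ j, ∑ i, (T (fun k => ξ k j) i) ^ 2 := by
          rw [Finset.sum_comm]
          exact Finset.sum_congr rfl fun j _ => Finset.sum_congr rfl fun i _ => by rw [hD]
      _ ≤ ∑ j, CT ^ 2 * ∑ i, (ξ i j) ^ 2 := by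
          refine Finset.sum_le_sum fun j _ => ?_
          have h1 : (euclNorm (T fun k => ξ k j)) ^ 2 ≤ (CT * euclNorm fun k => ξ k j) ^ 2 :=
            pow_le_pow_left₀ (euclNorm_nonneg' _) (hTb _) 2
          rw [euclNorm_sq] at h1
          calc ∑ i, (T (fun k => ξ k j) i) ^ 2 ≤ (CT * euclNorm fun k => ξ k j) ^ 2 := h1
            _ = CT ^ 2 * (euclNorm fun k => ξ k j) ^ 2 := by ring
            _ = CT ^ 2 * ∑ i, (ξ i j) ^ 2 := by rw [euclNorm_sq]
      _ = CT ^ 2 * ∑ i, ∑ j, (ξ i j) ^ 2 := by rw [← Finset.mul_sum, Finset.sum_comm]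
  have h2 : ∑ i, ∑ j, (D i j) ^ 2 ≤ (CT * frobNorm ξ) ^ 2 := by
    rw [mul_pow, frobNorm_sq]
    exact key
  calc frobNorm D = Real.sqrt (∑ i, ∑ j, (D i j) ^ 2) := rfl
    _ ≤ Real.sqrt ((CT * frobNorm ξ) ^ 2) := Real.sqrt_le_sqrt h2
    _ = CT * frobNorm ξ := Real.sqrt_sq (mul_nonneg hTn (frobNorm_nonneg' _))

lemma frob_sub_frob_le (A B : M33) : |frobNorm A - frobNorm B| ≤ frobNorm (A - B) := by
  rw [frobNorm_eq', frobNorm_eq', frobNorm_eq']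
  have : embM (A - B) = embM A - embM B := rfl
  rw [this]
  exact abs_norm_sub_norm_le _ _

lemma frob_sub_le (A B : M33) : frobNorm (A - B) ≤ frobNorm A + frobNorm B := by
  rw [frobNorm_eq', frobNorm_eq', frobNorm_eq']
  have : embM (A - B) = embM A - embM B := rfl
  rw [this]
  exact norm_sub_le _ _

lemma frob_neg_sub (A B : M33) : frobNorm (B - A) = frobNorm (A - B) := by
  rw [frobNorm_eq', frobNorm_eq']
  have h : embM (B - A) = -(embM (A - B)) := by
    rw [show B - A = -(A - B) by abel]
    rfl
  rw [h, norm_neg]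

lemma eucl_sub_le (a b : V3) : euclNorm (fun i => a i - b i) ≤ euclNorm a + euclNorm b := by
  rw [euclNorm_eq', euclNorm_eq', euclNorm_eq']
  have : embV (fun i => a i - b i) = embV a - embV b := rfl
  rw [this]
  exact norm_sub_le _ _

/-- continuity of the penalized integrand with respect to the projection. -/
theorem stmt_14
    (M : ℝ) (hM : 0 < M) (K : Set V3) (hK : IsCompact K)
    (f : V3 → M33 → ℝ)
    (hf : ContinuousOn (fun p : V3 × M33 => f p.1 p.2) (K ×ˢ {ξ : M33 | frobNorm ξ ≤ M}))
    (Φ : ℝ → ℝ) (hΦ : IsYoung Φ)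
    (L : ℝ) (hL : 0 ≤ L) (hLip : LipschitzOnWith (Real.toNNReal L) Φ (Set.Icc 0 (2 * M)))
    (V₁ V₂ : Submodule ℝ V3) (P₁ P₂ : V3 → V3)
    (hP₁ : IsOrthProjOnto V₁ P₁) (hP₂ : IsOrthProjOnto V₂ P₂) :
    ∀ x ∈ K, ∀ ξ : M33, frobNorm ξ ≤ M →
      |fbar Φ P₁ f x ξ - fbar Φ P₂ f x ξ| ≤
        sSup {e : ℝ | ∃ x' ∈ K, ∃ ξ' ζ' : M33, frobNorm ξ' ≤ M ∧ frobNorm ζ' ≤ M ∧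
            frobNorm (ξ' - ζ') ≤ M * opNormE (fun y => P₁ y - P₂ y) ∧
            e = |f x' ξ' - f x' ζ'|}
          + L * M * opNormE (fun y => P₁ y - P₂ y) := by
  intro x hx ξ hξ
  -- linearity & boundedness of T = P₁ - P₂
  have hTlin : IsLinearMap ℝ (fun y : V3 => P₁ y - P₂ y) := by
    constructor
    · intro a b
      rw [hP₁.1.map_add, hP₂.1.map_add]
      abel
    · intro c v
      rw [hP₁.1.map_smul, hP₂.1.map_smul, smul_sub]
  have hTb : ∀ y : V3, euclNorm y ≤ 1 → euclNorm (P₁ y - P₂ y) ≤ 2 := by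
    intro y hy
    have h1 : euclNorm (P₁ y - P₂ y) ≤ euclNorm (P₁ y) + euclNorm (P₂ y) := by
      have := eucl_sub_le (P₁ y) (P₂ y)
      have heq : (fun i => P₁ y i - P₂ y i) = P₁ y - P₂ y := rfl
      rwa [heq] at this
    have h2 := proj_contract hP₁ y
    have h3 := proj_contract hP₂ y
    linarith
  obtain ⟨hopN0, hopNb⟩ := opNormE_spec _ hTlin 2 hTb
  set N := opNormE (fun y => P₁ y - P₂ y) with hN
  -- projections contract the Frobenius norm column-wise
  have hcontr : ∀ (P : V3 → V3) (V : Submodule ℝ V3), IsOrthProjOnto V P →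
      frobNorm (Pmat P ξ) ≤ M := by
    intro P V hP
    have := frob_col_le P 1 zero_le_one
      (fun v => by rw [one_mul]; exact proj_contract hP v) ξ (Pmat P ξ)
      (fun i j => rfl)
    rw [one_mul] at this
    exact this.trans hξ
  have hP1M : frobNorm (Pmat P₁ ξ) ≤ M := hcontr P₁ V₁ hP₁
  have hP2M : frobNorm (Pmat P₂ ξ) ≤ M := hcontr P₂ V₂ hP₂
  -- the key difference bound
  have hdiff : frobNorm (Pmat P₁ ξ - Pmat P₂ ξ) ≤ M * N := by
    have h1 := frob_col_le (fun y : V3 => P₁ y - P₂ y) N hopN0 hopNb ξ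
      (Pmat P₁ ξ - Pmat P₂ ξ) (fun i j => by simp [Pmat, Matrix.sub_apply])
    calc frobNorm (Pmat P₁ ξ - Pmat P₂ ξ) ≤ N * frobNorm ξ := h1
      _ ≤ N * M := mul_le_mul_of_nonneg_left hξ hopN0
      _ = M * N := mul_comm _ _
  -- the sup set is bounded above
  have hScomp : IsCompact {ζ : M33 | frobNorm ζ ≤ M} := by
    have hcont : Continuous fun y : EuclideanSpace ℝ (Fin 3 × Fin 3) =>
        (Matrix.of fun i j => y (i, j) : M33) := by
      refine continuous_pi fun i => continuous_pi fun j => ?_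
      exact (EuclideanSpace.proj ((i, j) : Fin 3 × Fin 3)).continuous
    have himg : {ζ : M33 | frobNorm ζ ≤ M} =
        (fun y : EuclideanSpace ℝ (Fin 3 × Fin 3) => (Matrix.of fun i j => y (i, j) : M33)) ''
          Metric.closedBall 0 M := by
      ext ζ
      constructor
      · intro hζ
        refine ⟨embM ζ, ?_, rfl⟩
        rw [Metric.mem_closedBall, dist_zero_right, ← frobNorm_eq']
        exact hζ
      · rintro ⟨y, hy, rfl⟩
        have heq : embM (Matrix.of fun i j => y (i, j) : M33) = y := rfl
        show frobNorm _ ≤ M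
        rw [frobNorm_eq', heq]
        rwa [Metric.mem_closedBall, dist_zero_right] at hy
    rw [himg]
    exact (isCompact_closedBall 0 M).image hcont
  obtain ⟨C, hC⟩ := (hK.prod hScomp).exists_bound_of_continuousOn hf
  have hEbdd : BddAbove {e : ℝ | ∃ x' ∈ K, ∃ ξ' ζ' : M33, frobNorm ξ' ≤ M ∧ frobNorm ζ' ≤ M ∧
      frobNorm (ξ' - ζ') ≤ M * N ∧ e = |f x' ξ' - f x' ζ'|} := by
    refine ⟨2 * C, ?_⟩
    rintro e ⟨x', hx', ξ', ζ', hξ', hζ', -, rfl⟩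
    have h1 := hC (x', ξ') ⟨hx', hξ'⟩
    have h2 := hC (x', ζ') ⟨hx', hζ'⟩
    rw [Real.norm_eq_abs] at h1 h2
    have := abs_sub (f x' ξ') (f x' ζ')
    calc |f x' ξ' - f x' ζ'| ≤ |f x' ξ'| + |f x' ζ'| := abs_sub _ _
      _ ≤ 2 * C := by linarith
  -- f-part bound
  have hfmem : |f x (Pmat P₁ ξ) - f x (Pmat P₂ ξ)| ∈
      {e : ℝ | ∃ x' ∈ K, ∃ ξ' ζ' : M33, frobNorm ξ' ≤ M ∧ frobNorm ζ' ≤ M ∧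
        frobNorm (ξ' - ζ') ≤ M * N ∧ e = |f x' ξ' - f x' ζ'|} :=
    ⟨x, hx, Pmat P₁ ξ, Pmat P₂ ξ, hP1M, hP2M, hdiff, rfl⟩
  have hfle := le_csSup hEbdd hfmem
  -- Φ-part bound
  set r₁ := frobNorm (ξ - Pmat P₁ ξ) with hr₁
  set r₂ := frobNorm (ξ - Pmat P₂ ξ) with hr₂
  have hr₁mem : r₁ ∈ Set.Icc 0 (2 * M) := by
    refine ⟨frobNorm_nonneg' _, ?_⟩
    have := frob_sub_le ξ (Pmat P₁ ξ)
    linarith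
  have hr₂mem : r₂ ∈ Set.Icc 0 (2 * M) := by
    refine ⟨frobNorm_nonneg' _, ?_⟩
    have := frob_sub_le ξ (Pmat P₂ ξ)
    linarith
  have hrd : |r₁ - r₂| ≤ M * N := by
    have h1 := frob_sub_frob_le (ξ - Pmat P₁ ξ) (ξ - Pmat P₂ ξ)
    have h2 : (ξ - Pmat P₁ ξ) - (ξ - Pmat P₂ ξ) = Pmat P₂ ξ - Pmat P₁ ξ := by abel
    have h3 : frobNorm (Pmat P₂ ξ - Pmat P₁ ξ) = frobNorm (Pmat P₁ ξ - Pmat P₂ ξ) :=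
      frob_neg_sub (Pmat P₁ ξ) (Pmat P₂ ξ)
    rw [h2, h3] at h1
    exact h1.trans hdiff
  have hΦd : |Φ r₁ - Φ r₂| ≤ L * (M * N) := by
    have h1 := hLip.dist_le_mul r₁ hr₁mem r₂ hr₂mem
    rw [Real.dist_eq, Real.dist_eq, Real.coe_toNNReal L hL] at h1
    calc |Φ r₁ - Φ r₂| ≤ L * |r₁ - r₂| := h1
      _ ≤ L * (M * N) := mul_le_mul_of_nonneg_left hrd hL
  have hsplit : fbar Φ P₁ f x ξ - fbar Φ P₂ f x ξ =
      (f x (Pmat P₁ ξ) - f x (Pmat P₂ ξ)) + (Φ r₁ - Φ r₂) := by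
    simp only [fbar, hr₁, hr₂]
    ring
  calc |fbar Φ P₁ f x ξ - fbar Φ P₂ f x ξ|
      ≤ |f x (Pmat P₁ ξ) - f x (Pmat P₂ ξ)| + |Φ r₁ - Φ r₂| := by
        rw [hsplit]; exact abs_add_le _ _
    _ ≤ sSup {e : ℝ | ∃ x' ∈ K, ∃ ξ' ζ' : M33, frobNorm ξ' ≤ M ∧ frobNorm ζ' ≤ M ∧
          frobNorm (ξ' - ζ') ≤ M * N ∧ e = |f x' ξ' - f x' ζ'|} + L * (M * N) :=
        add_le_add hfle hΦd
    _ = sSup {e : ℝ | ∃ x' ∈ K, ∃ ξ' ζ' : M33, frobNorm ξ' ≤ M ∧ frobNorm ζ' ≤ M ∧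
          frobNorm (ξ' - ζ') ≤ M * N ∧ e = |f x' ξ' - f x' ζ'|} + L * M * N := by ring
end
end
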